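/- arXiv:1902.06901 — 2 statements merged into one kernel-verified Lean document; each statement's English description precedes it below -/
import Mathlib

section
/- Let X be a locally compact, connected Hausdorff space and ρ a quasi-integral on C_c(X). The following are equivalent: (i) ρ is simple, i.e., the corresponding topological measure μ_ρ takes only the values 0 and 1; (ii) for every f ∈ C_c(X) and every continuous function φ : ℝ → ℝ with φ(0) = 0 one has ρ(φ ∘ f) = φ(ρ(f)); (iii) ρ is multiplicative on each singly generated subalgebra, i.e., for each f ∈ C_c(X), ρ(g·h) = ρ(g)·ρ(h) for all g, h ∈ B(f). -/
open scoped ENNReal CompactlySupported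
open CompactlySupportedContinuousMap

namespace QLF

variable {X Y : Type*}

/-- Membership in the singly generated subalgebra `B(f)`:
`g ∈ B(f)` iff `g = φ ∘ f` for some continuous `φ` with `φ 0 = 0`. -/
def InB [TopologicalSpace X] (f g : C_c(X, ℝ)) : Prop :=
  ∃ φ : C(ℝ, ℝ), φ 0 = 0 ∧ ∀ x, g x = φ (f x)

/-- A quasi-integral (quasi-linear functional) on `C_c(X)`. -/
structure IsQuasiIntegral [TopologicalSpace X] (ρ : C_c(X, ℝ) → ℝ) : Prop where
  smul : ∀ (a : ℝ) (f : C_c(X, ℝ)), ρ (a • f) = a * ρ f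
  add : ∀ f g h : C_c(X, ℝ), InB f g → InB f h → ρ (g + h) = ρ g + ρ h
  pos : ∀ f : C_c(X, ℝ), (∀ x, 0 ≤ f x) → 0 ≤ ρ f

/-- The value of the topological measure corresponding to `ρ` on an open set. -/
noncomputable def qiOpen [TopologicalSpace X] (ρ : C_c(X, ℝ) → ℝ) (U : Set X) : ℝ≥0∞ :=
  ⨆ (f : C_c(X, ℝ)) (_ : (∀ x, 0 ≤ f x ∧ f x ≤ 1) ∧ tsupport f ⊆ U), ENNReal.ofReal (ρ f)

open Classical in
/-- The topological measure corresponding to a quasi-integral `ρ`: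
on open sets given by `qiOpen`, on other (closed) sets by outer regularity. -/
noncomputable def qiMeas [TopologicalSpace X] (ρ : C_c(X, ℝ) → ℝ) (A : Set X) : ℝ≥0∞ :=
  if IsOpen A then qiOpen ρ A
  else ⨅ (U : Set X) (_ : IsOpen U ∧ A ⊆ U), qiOpen ρ U

/-- A topological measure on `X` (as a set function on all sets; only its values on
open and closed sets are constrained/meaningful). -/
def IsTopMeasure [TopologicalSpace X] (μ : Set X → ℝ≥0∞) : Prop :=
  (∀ A B : Set X, Disjoint A B → (IsCompact A ∨ IsOpen A) → (IsCompact B ∨ IsOpen B) →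
      (IsCompact (A ∪ B) ∨ IsOpen (A ∪ B)) → μ (A ∪ B) = μ A + μ B) ∧
  (∀ U : Set X, IsOpen U → μ U = ⨆ (K : Set X) (_ : IsCompact K ∧ K ⊆ U), μ K) ∧
  (∀ F : Set X, IsClosed F → μ F = ⨅ (U : Set X) (_ : IsOpen U ∧ F ⊆ U), μ U)

/-- A simple topological measure: assumes only the values 0 and 1 on open and closed sets. -/
def IsSimpleTM [TopologicalSpace X] (μ : Set X → ℝ≥0∞) : Prop :=
  IsTopMeasure μ ∧ ∀ A : Set X, IsOpen A ∨ IsClosed A → μ A = 0 ∨ μ A = 1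

/-- A simple quasi-integral: its corresponding topological measure assumes only 0 and 1. -/
def IsSimpleQI [TopologicalSpace X] (ρ : C_c(X, ℝ) → ℝ) : Prop :=
  ∀ A : Set X, IsOpen A ∨ IsClosed A → qiMeas ρ A = 0 ∨ qiMeas ρ A = 1

/-- An almost simple quasi-integral: its corresponding topological measure is a positive
scalar multiple of a simple topological measure. -/
def IsAlmostSimpleQI [TopologicalSpace X] (ρ : C_c(X, ℝ) → ℝ) : Prop :=
  ∃ (c : ℝ≥0∞) (μ' : Set X → ℝ≥0∞), 0 < c ∧ c ≠ ∞ ∧ IsSimpleTM μ' ∧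
    ∀ A : Set X, IsOpen A ∨ IsClosed A → qiMeas ρ A = c * μ' A

/-- The composition `φ ∘ f` as an element of `C_c(X, ℝ)`, for continuous `φ` with `φ 0 = 0`. -/
noncomputable def compCc [TopologicalSpace X] (φ : C(ℝ, ℝ)) (hφ : φ 0 = 0)
    (f : C_c(X, ℝ)) : C_c(X, ℝ) :=
  ⟨⟨fun x => φ (f x), φ.continuous.comp f.continuous⟩, f.hasCompactSupport'.comp_left hφ⟩

section Products

variable [TopologicalSpace X] [TopologicalSpace Y]

/-- The section `f_y ∈ C_c(X)` of `f ∈ C_c(X × Y)`, `f_y (x) = f (x, y)`. -/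
noncomputable def fiberY [T2Space X] (f : C_c(X × Y, ℝ)) (y : Y) : C_c(X, ℝ) :=
  ⟨⟨fun x => f (x, y), f.continuous.comp (continuous_id.prodMk continuous_const)⟩,
    HasCompactSupport.intro (f.hasCompactSupport'.image continuous_fst)
      (fun x hx => by
        by_contra h
        exact hx ⟨(x, y), subset_tsupport _ h, rfl⟩)⟩

/-- The section `f_x ∈ C_c(Y)` of `f ∈ C_c(X × Y)`, `f_x (y) = f (x, y)`. -/
noncomputable def fiberX [T2Space Y] (f : C_c(X × Y, ℝ)) (x : X) : C_c(Y, ℝ) :=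
  ⟨⟨fun y => f (x, y), f.continuous.comp (continuous_const.prodMk continuous_id)⟩,
    HasCompactSupport.intro (f.hasCompactSupport'.image continuous_snd)
      (fun y hy => by
        by_contra h
        exact hy ⟨(x, y), subset_tsupport _ h, rfl⟩)⟩

/-- `T_ρ(f) (y) = ρ (f_y)` as a bare function on `Y`. -/
noncomputable def Tmap [T2Space X] (ρ : C_c(X, ℝ) → ℝ) (f : C_c(X × Y, ℝ)) : Y → ℝ :=
  fun y => ρ (fiberY f y)

/-- `S_η(f) (x) = η (f_x)` as a bare function on `X`. -/
noncomputable def Smap [T2Space Y] (η : C_c(Y, ℝ) → ℝ) (f : C_c(X × Y, ℝ)) : X → ℝ :=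
  fun x => η (fiberX f x)

open Classical in
/-- `T_ρ(f)` as an element of `C_c(Y, ℝ)` (when `ρ` is a quasi-integral, `T_ρ(f)` is indeed
continuous with compact support, and this definition takes the first branch). -/
noncomputable def TCc [T2Space X] (ρ : C_c(X, ℝ) → ℝ) (f : C_c(X × Y, ℝ)) : C_c(Y, ℝ) :=
  if h : Continuous (Tmap ρ f) ∧ HasCompactSupport (Tmap ρ f)
  then ⟨⟨Tmap ρ f, h.1⟩, h.2⟩ else 0

open Classical in
/-- `S_η(f)` as an element of `C_c(X, ℝ)`. -/
noncomputable def SCc [T2Space Y] (η : C_c(Y, ℝ) → ℝ) (f : C_c(X × Y, ℝ)) : C_c(X, ℝ) :=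
  if h : Continuous (Smap η f) ∧ HasCompactSupport (Smap η f)
  then ⟨⟨Smap η f, h.1⟩, h.2⟩ else 0

/-- The repeated quasi-integral `(η × ρ) (f) = η (T_ρ (f))`. -/
noncomputable def prodQI [T2Space X] (η : C_c(Y, ℝ) → ℝ) (ρ : C_c(X, ℝ) → ℝ) :
    C_c(X × Y, ℝ) → ℝ := fun f => η (TCc ρ f)

/-- The repeated quasi-integral `(ρ × η) (f) = ρ (S_η (f))`. -/
noncomputable def prodQI' [T2Space Y] (ρ : C_c(X, ℝ) → ℝ) (η : C_c(Y, ℝ) → ℝ) :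
    C_c(X × Y, ℝ) → ℝ := fun f => ρ (SCc η f)

/-- The tensor product `(g ⊗ h) (x, y) = g (x) * h (y)` as an element of `C_c(X × Y, ℝ)`. -/
noncomputable def tensor (g : C_c(X, ℝ)) (h : C_c(Y, ℝ)) : C_c(X × Y, ℝ) :=
  ⟨⟨fun p => g p.1 * h p.2,
      (g.continuous.comp continuous_fst).mul (h.continuous.comp continuous_snd)⟩,
    HasCompactSupport.intro' (g.hasCompactSupport'.prod h.hasCompactSupport')
      ((isClosed_tsupport _).prod (isClosed_tsupport _))
      (fun p hp => by
        rcases not_and_or.mp (by simpa [Set.mem_prod] using hp) with h1 | h1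
        · simp [image_eq_zero_of_notMem_tsupport h1]
        · simp [image_eq_zero_of_notMem_tsupport h1])⟩

end Products

/-- A topological measure is subadditive (equivalently, extends to a Borel measure). -/
def IsSubadditiveOnOpens [TopologicalSpace X] (μ : Set X → ℝ≥0∞) : Prop :=
  ∀ U V : Set X, IsOpen U → IsOpen V → μ (U ∪ V) ≤ μ U + μ V

/-- `μ` is a positive scalar multiple of a point mass `δ_{x₀}` (on open and closed sets). -/
def IsPointMassMultiple [TopologicalSpace X] (μ : Set X → ℝ≥0∞) : Prop :=
  ∃ (c : ℝ≥0∞) (x₀ : X), 0 < c ∧ c ≠ ∞ ∧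
    ∀ A : Set X, IsOpen A ∨ IsClosed A →
      μ A = c * A.indicator (fun _ => (1 : ℝ≥0∞)) x₀

end QLF

namespace QLF
section Basics

variable {X : Type*} [TopologicalSpace X] {ρ : C_c(X, ℝ) → ℝ}

/-- Admissible function for an open set in the definition of `qiOpen`. -/
def Adm (U : Set X) (h : C_c(X, ℝ)) : Prop :=
  (∀ x, 0 ≤ h x ∧ h x ≤ 1) ∧ tsupport ⇑h ⊆ U

lemma le_qiOpen {U : Set X} {h : C_c(X, ℝ)} (hh : Adm U h) :
    ENNReal.ofReal (ρ h) ≤ qiOpen ρ U := by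
  refine le_trans ?_ (le_iSup _ h)
  exact le_iSup (fun _ : (∀ x, 0 ≤ h x ∧ h x ≤ 1) ∧ tsupport ⇑h ⊆ U => ENNReal.ofReal (ρ h)) hh

lemma qiOpen_le {U : Set X} {c : ℝ≥0∞} (H : ∀ h, Adm U h → ENNReal.ofReal (ρ h) ≤ c) :
    qiOpen ρ U ≤ c :=
  iSup₂_le fun h hh => H h hh

lemma qiOpen_mono {U V : Set X} (hUV : U ⊆ V) : qiOpen ρ U ≤ qiOpen ρ V :=
  qiOpen_le fun h hh => le_qiOpen ⟨hh.1, hh.2.trans hUV⟩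

lemma qiMeas_of_isOpen {U : Set X} (hU : IsOpen U) : qiMeas ρ U = qiOpen ρ U := by
  simp [qiMeas, hU]

lemma rho_zero (hρ : IsQuasiIntegral ρ) : ρ 0 = 0 := by
  have := hρ.smul 0 0
  simpa using this

lemma inB_self (f : C_c(X, ℝ)) : InB f f :=
  ⟨ContinuousMap.id ℝ, rfl, fun _ => rfl⟩

lemma compCc_apply (φ : C(ℝ, ℝ)) (hφ : φ 0 = 0) (f : C_c(X, ℝ)) (x : X) :
    compCc φ hφ f x = φ (f x) := rfl

lemma inB_compCc (φ : C(ℝ, ℝ)) (hφ : φ 0 = 0) (f : C_c(X, ℝ)) : InB f (compCc φ hφ f) :=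
  ⟨φ, hφ, fun _ => rfl⟩

/-- Monotonicity of `ρ` inside a singly generated subalgebra. -/
lemma mono_inB (hρ : IsQuasiIntegral ρ) {f g h : C_c(X, ℝ)}
    (hg : InB f g) (hh : InB f h) (hle : ∀ x, g x ≤ h x) : ρ g ≤ ρ h := by
  obtain ⟨φ, hφ0, hφ⟩ := hg
  obtain ⟨ψ, hψ0, hψ⟩ := hh
  have h1 : InB f (h - g) := ⟨ψ - φ, by simp [hφ0, hψ0], fun x => by
    simp [CompactlySupportedContinuousMap.sub_apply, hφ x, hψ x]⟩
  have h2 := hρ.add f g (h - g) ⟨φ, hφ0, hφ⟩ h1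
  rw [add_sub_cancel] at h2
  have h3 : 0 ≤ ρ (h - g) := hρ.pos _ (fun x => by
    have := hle x; simp only [CompactlySupportedContinuousMap.sub_apply]; linarith)
  linarith

/-- Additivity of `ρ` on functions with disjoint supports. -/
lemma disjoint_add (hρ : IsQuasiIntegral ρ) {g₁ g₂ : C_c(X, ℝ)}
    (h1 : ∀ x, 0 ≤ g₁ x) (h2 : ∀ x, 0 ≤ g₂ x) (hd : ∀ x, g₁ x = 0 ∨ g₂ x = 0) :
    ρ (g₁ + g₂) = ρ g₁ + ρ g₂ := by
  set p := g₁ - g₂ with hp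
  have hg₁ : InB p g₁ := by
    refine ⟨⟨fun s => max s 0, (continuous_id.max continuous_const)⟩, by simp, fun x => ?_⟩
    rcases hd x with h | h <;> simp only [hp, ContinuousMap.coe_mk, CompactlySupportedContinuousMap.sub_apply, h]
    · rw [zero_sub, max_eq_right (neg_nonpos.2 (h2 x))]
    · rw [sub_zero, max_eq_left (h1 x)]
  have hg₂ : InB p g₂ := by
    refine ⟨⟨fun s => max (-s) 0, (continuous_neg.max continuous_const)⟩, by simp, fun x => ?_⟩
    rcases hd x with h | h <;> simp only [hp, ContinuousMap.coe_mk, CompactlySupportedContinuousMap.sub_apply, h]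
    · rw [zero_sub, neg_neg, max_eq_left (h2 x)]
    · rw [sub_zero, max_eq_right (neg_nonpos.2 (h1 x))]
  exact hρ.add p g₁ g₂ hg₁ hg₂

/-- The fundamental cross-algebra comparison: if `w = 1` on a set containing the
support of an admissible `h`, then `ρ h ≤ ρ w`. -/
lemma rho_le_of_one_on (hρ : IsQuasiIntegral ρ) {h w : C_c(X, ℝ)} {U : Set X}
    (hb : ∀ x, 0 ≤ h x ∧ h x ≤ 1) (hsupp : tsupport ⇑h ⊆ U)
    (hw : ∀ x, 0 ≤ w x ∧ w x ≤ 1) (hw1 : ∀ x ∈ U, w x = 1) : ρ h ≤ ρ w := by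
  set k := h + w with hk
  have hzero : ∀ x, x ∉ U → h x = 0 := fun x hx =>
    image_eq_zero_of_notMem_tsupport (fun hc => hx (hsupp hc))
  have hInBh : InB k h := by
    refine ⟨⟨fun s => max (s - 1) 0, ((continuous_id.sub continuous_const).max
      continuous_const)⟩, by norm_num, fun x => ?_⟩
    by_cases hx : x ∈ U
    · simp only [hk, ContinuousMap.coe_mk, CompactlySupportedContinuousMap.add_apply, hw1 x hx]
      rw [add_sub_cancel_right, max_eq_left (hb x).1]
    · simp only [hk, ContinuousMap.coe_mk, CompactlySupportedContinuousMap.add_apply, hzero x hx, zero_add]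
      rw [max_eq_right (by linarith [(hw x).2])]
  have hInBw : InB k w := by
    refine ⟨⟨fun s => min s 1, (continuous_id.min continuous_const)⟩, by norm_num, fun x => ?_⟩
    by_cases hx : x ∈ U
    · simp only [hk, ContinuousMap.coe_mk, CompactlySupportedContinuousMap.add_apply, hw1 x hx]
      rw [min_eq_right (by linarith [(hb x).1, (hb x).2])]
    · simp only [hk, ContinuousMap.coe_mk, CompactlySupportedContinuousMap.add_apply, hzero x hx, zero_add]
      rw [min_eq_left (hw x).2]
  refine mono_inB hρ hInBh hInBw (fun x => ?_)
  by_cases hx : x ∈ U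
  · rw [hw1 x hx]; exact (hb x).2
  · rw [hzero x hx]; exact (hw x).1

/-- Positive part of `g` as an element of `C_c`. -/
noncomputable def pPart (g : C_c(X, ℝ)) : C_c(X, ℝ) :=
  compCc ⟨fun s => max s 0, continuous_id.max continuous_const⟩ (by simp) g

/-- Negative part of `g` as an element of `C_c`. -/
noncomputable def nPart (g : C_c(X, ℝ)) : C_c(X, ℝ) :=
  compCc ⟨fun s => max (-s) 0, continuous_neg.max continuous_const⟩ (by simp) g

@[simp] lemma pPart_apply (g : C_c(X, ℝ)) (x : X) : pPart g x = max (g x) 0 := rfl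
@[simp] lemma nPart_apply (g : C_c(X, ℝ)) (x : X) : nPart g x = max (-g x) 0 := rfl

lemma pPart_nonneg (g : C_c(X, ℝ)) (x : X) : 0 ≤ pPart g x := le_max_right _ _
lemma nPart_nonneg (g : C_c(X, ℝ)) (x : X) : 0 ≤ nPart g x := le_max_right _ _

lemma rho_decomp (hρ : IsQuasiIntegral ρ) (g : C_c(X, ℝ)) :
    ρ g = ρ (pPart g) - ρ (nPart g) := by
  have hInB1 : InB g (pPart g) := inB_compCc _ _ _
  have hInB2 : InB g ((-1 : ℝ) • nPart g) := by
    refine ⟨⟨fun s => min s 0, continuous_id.min continuous_const⟩, by simp, fun x => ?_⟩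
    simp only [CompactlySupportedContinuousMap.smul_apply, nPart_apply, ContinuousMap.coe_mk, smul_eq_mul]
    rcases le_total (g x) 0 with h | h
    · rw [min_eq_left h, max_eq_left (by linarith)]; ring
    · rw [min_eq_right h, max_eq_right (by linarith)]; ring
  have hsum : pPart g + (-1 : ℝ) • nPart g = g := by
    ext x
    simp only [CompactlySupportedContinuousMap.add_apply, CompactlySupportedContinuousMap.smul_apply, pPart_apply, nPart_apply, smul_eq_mul]
    rcases le_total (g x) 0 with h | h
    · rw [max_eq_right h, max_eq_left (by linarith)]; ring
    · rw [max_eq_left h, max_eq_right (by linarith)]; ring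
  have := hρ.add g (pPart g) ((-1 : ℝ) • nPart g) hInB1 hInB2
  rw [hsum, hρ.smul] at this
  linarith

lemma exists_bound (g : C_c(X, ℝ)) : ∃ M : ℝ, 0 < M ∧ ∀ x, g x ≤ M := by
  have hcs : IsCompact (tsupport ⇑g) := g.hasCompactSupport'
  rcases eq_or_ne (tsupport ⇑g) ∅ with hK | hK
  · refine ⟨1, one_pos, fun x => ?_⟩
    have hx0 : g x = 0 := image_eq_zero_of_notMem_tsupport (by simp [hK])
    rw [hx0]; norm_num
  · obtain ⟨x₀, hx₀, hmax⟩ := hcs.exists_isMaxOn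
      (Set.nonempty_iff_ne_empty.2 hK) g.continuous.continuousOn
    refine ⟨max (g x₀) 0 + 1, by positivity, fun x => ?_⟩
    by_cases hx : x ∈ tsupport ⇑g
    · have h3 : g x ≤ g x₀ := hmax hx
      have h2 : g x₀ ≤ max (g x₀) 0 := le_max_left _ _
      linarith
    · have hx0 : g x = 0 := image_eq_zero_of_notMem_tsupport hx
      rw [hx0]; positivity

lemma qiOpen_empty (hρ : IsQuasiIntegral ρ) : qiOpen ρ (∅ : Set X) = 0 := by
  refine le_antisymm (qiOpen_le fun h hh => ?_) (zero_le)
  have : h = 0 := by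
    apply CompactlySupportedContinuousMap.ext
    intro x
    have : x ∉ tsupport ⇑h := fun hc => (hh.2 hc).elim
    simpa using image_eq_zero_of_notMem_tsupport this
  rw [this, rho_zero hρ]
  simp

end Basics
section Rep

variable {X : Type*} [TopologicalSpace X] {ρ : C_c(X, ℝ) → ℝ}

/-- The candidate value of `ρ g` computed from the topological measure: the largest `t`
such that `μ {g > t} = 1`. -/
noncomputable def rr (ρ : C_c(X, ℝ) → ℝ) (g : C_c(X, ℝ)) : ℝ :=
  sSup (insert 0 {t : ℝ | 0 < t ∧ qiMeas ρ {x | t < g x} = 1})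

lemma isOpen_lt_set (g : C_c(X, ℝ)) (t : ℝ) : IsOpen {x | t < g x} :=
  isOpen_lt continuous_const g.continuous

lemma bddAbove_rr (ρ : C_c(X, ℝ) → ℝ) (hρ : IsQuasiIntegral ρ) (g : C_c(X, ℝ)) :
    BddAbove (insert 0 {t : ℝ | 0 < t ∧ qiMeas ρ {x | t < g x} = 1}) := by
  obtain ⟨M, hM, hMb⟩ := exists_bound g
  refine ⟨M, fun t ht => ?_⟩
  rcases Set.mem_insert_iff.1 ht with h | h
  · exact h ▸ hM.le
  · by_contra hc
    push_neg at hc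
    have hempty : {x | t < g x} = ∅ := by
      ext x
      simp only [Set.mem_setOf_eq, Set.mem_empty_iff_false, iff_false, not_lt]
      exact (hMb x).trans hc.le
    have hone := h.2
    rw [hempty, qiMeas_of_isOpen isOpen_empty, qiOpen_empty hρ] at hone
    exact one_ne_zero hone.symm

lemma rr_nonneg (hρ : IsQuasiIntegral ρ) (g : C_c(X, ℝ)) : 0 ≤ rr ρ g :=
  le_csSup (bddAbove_rr ρ hρ g) (Set.mem_insert _ _)

lemma mu_zero_of_rr_lt (hρ : IsQuasiIntegral ρ) (hS : IsSimpleQI ρ) {g : C_c(X, ℝ)} {t : ℝ}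
    (hlt : rr ρ g < t) : qiMeas ρ {x | t < g x} = 0 := by
  rcases hS _ (Or.inl (isOpen_lt_set g t)) with h | h
  · exact h
  · exfalso
    have ht0 : 0 < t := lt_of_le_of_lt (rr_nonneg hρ g) hlt
    have : t ≤ rr ρ g := le_csSup (bddAbove_rr ρ hρ g) (Set.mem_insert_of_mem _ ⟨ht0, h⟩)
    linarith

lemma mu_one_of_lt_rr (hρ : IsQuasiIntegral ρ) (hX : qiOpen ρ (Set.univ : Set X) = 1)
    {g : C_c(X, ℝ)} {t : ℝ} (ht0 : 0 < t) (hlt : t < rr ρ g) :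
    qiMeas ρ {x | t < g x} = 1 := by
  obtain ⟨t', ht'mem, htt'⟩ := exists_lt_of_lt_csSup ⟨0, Set.mem_insert _ _⟩ hlt
  rcases Set.mem_insert_iff.1 ht'mem with h | h
  · exact absurd (h ▸ htt') (by linarith)
  · rw [qiMeas_of_isOpen (isOpen_lt_set g t)]
    refine le_antisymm (le_trans (qiOpen_mono (Set.subset_univ _)) hX.le) ?_
    calc (1 : ℝ≥0∞) = qiMeas ρ {x | t' < g x} := h.2.symm
    _ = qiOpen ρ {x | t' < g x} := qiMeas_of_isOpen (isOpen_lt_set g t')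
    _ ≤ qiOpen ρ {x | t < g x} := qiOpen_mono (fun x hx => lt_trans htt' hx)

/-- The representation theorem for simple quasi-integrals: `ρ g = rr ρ g` for `g ≥ 0`. -/
theorem rho_eq_rr (hρ : IsQuasiIntegral ρ) (hS : IsSimpleQI ρ)
    (hX : qiOpen ρ (Set.univ : Set X) = 1) {g : C_c(X, ℝ)} (hg : ∀ x, 0 ≤ g x) :
    ρ g = rr ρ g := by
  have hrnn : 0 ≤ rr ρ g := rr_nonneg hρ g
  refine le_antisymm ?_ ?_
  · -- upper bound : ρ g ≤ rr ρ g
    refine le_of_forall_pos_le_add (fun ε hε => ?_)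
    set r := rr ρ g with hr
    -- the three pieces
    set φ₁ : C(ℝ, ℝ) := ⟨fun s => min s r, continuous_id.min continuous_const⟩ with hφ₁
    set φ₂ : C(ℝ, ℝ) := ⟨fun s => min (max (s - r) 0) ε,
      (((continuous_id.sub continuous_const).max continuous_const).min continuous_const)⟩
      with hφ₂
    set φ₃ : C(ℝ, ℝ) := ⟨fun s => max (s - r - ε) 0,
      ((continuous_id.sub continuous_const).sub continuous_const).max continuous_const⟩
      with hφ₃
    have hφ₁0 : φ₁ 0 = 0 := by simp [hφ₁, min_eq_left hrnn]
    have hφ₂0 : φ₂ 0 = 0 := by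
      simp only [hφ₂, ContinuousMap.coe_mk, zero_sub]
      rw [max_eq_right (neg_nonpos.2 hrnn), min_eq_left hε.le]
    have hφ₃0 : φ₃ 0 = 0 := by
      simp only [hφ₃, ContinuousMap.coe_mk, zero_sub]
      rw [max_eq_right]
      linarith
    set p₁ := compCc φ₁ hφ₁0 g
    set p₂ := compCc φ₂ hφ₂0 g
    set p₃ := compCc φ₃ hφ₃0 g
    have hsplit : ρ g = ρ p₁ + (ρ p₂ + ρ p₃) := by
      have h23 : InB g (p₂ + p₃) := by
        refine ⟨φ₂ + φ₃, by simp [hφ₂0, hφ₃0], fun x => by simp [CompactlySupportedContinuousMap.add_apply]; rfl⟩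
      have e1 : ρ (p₁ + (p₂ + p₃)) = ρ p₁ + ρ (p₂ + p₃) :=
        hρ.add g p₁ (p₂ + p₃) (inB_compCc _ _ _) h23
      have e2 : ρ (p₂ + p₃) = ρ p₂ + ρ p₃ :=
        hρ.add g p₂ p₃ (inB_compCc _ _ _) (inB_compCc _ _ _)
      have e3 : p₁ + (p₂ + p₃) = g := by
        ext x
        simp only [CompactlySupportedContinuousMap.add_apply, compCc_apply, p₁, p₂, p₃, hφ₁, hφ₂, hφ₃, ContinuousMap.coe_mk]
        rcases le_total (g x) r with h | h
        · rw [min_eq_left h, max_eq_right (by linarith), min_eq_left hε.le,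
            max_eq_right (by linarith)]
          ring
        · rcases le_total (g x) (r + ε) with h' | h'
          · rw [min_eq_right h, max_eq_left (by linarith), min_eq_left (by linarith),
              max_eq_right (by linarith)]
            ring
          · rw [min_eq_right h, max_eq_left (by linarith), min_eq_right (by linarith),
              max_eq_left (by linarith)]
            ring
      rw [← e3, e1, e2]
    have hb1 : ρ p₁ ≤ r := by
      rcases eq_or_lt_of_le hrnn with h0 | h0
      · have : p₁ = 0 := by
          ext x
          simp only [compCc_apply, p₁, hφ₁, ContinuousMap.coe_mk, CompactlySupportedContinuousMap.zero_apply]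
          rw [← h0] at *
          exact min_eq_right (hg x)
        rw [this, rho_zero hρ, ← h0]
      · have hadm : Adm Set.univ (r⁻¹ • p₁) := by
          refine ⟨fun x => ?_, Set.subset_univ _⟩
          simp only [CompactlySupportedContinuousMap.smul_apply, compCc_apply, p₁, hφ₁, ContinuousMap.coe_mk, smul_eq_mul]
          constructor
          · exact mul_nonneg (inv_nonneg.2 h0.le) (le_min (hg x) hrnn)
          · rw [inv_mul_le_one₀ h0]
            exact min_le_right _ _
        have := le_qiOpen (ρ := ρ) hadm
        rw [hX] at this
        rw [ENNReal.ofReal_le_one, hρ.smul, inv_mul_le_one₀ h0] at this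
        exact this
    have hb2 : ρ p₂ ≤ ε := by
      have hadm : Adm Set.univ (ε⁻¹ • p₂) := by
        refine ⟨fun x => ?_, Set.subset_univ _⟩
        simp only [CompactlySupportedContinuousMap.smul_apply, compCc_apply, p₂, hφ₂, ContinuousMap.coe_mk, smul_eq_mul]
        constructor
        · exact mul_nonneg (inv_nonneg.2 hε.le) (le_min (le_max_right _ _) hε.le)
        · rw [inv_mul_le_one₀ hε]
          exact min_le_right _ _
      have := le_qiOpen (ρ := ρ) hadm
      rw [hX] at this
      rw [ENNReal.ofReal_le_one, hρ.smul, inv_mul_le_one₀ hε] at this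
      exact this
    have hb3 : ρ p₃ ≤ 0 := by
      obtain ⟨M, hM0, hMb⟩ := exists_bound g
      have hadm : Adm {x | r + ε/2 < g x} (M⁻¹ • p₃) := by
        constructor
        · intro x
          simp only [CompactlySupportedContinuousMap.smul_apply, compCc_apply, p₃, hφ₃, ContinuousMap.coe_mk, smul_eq_mul]
          constructor
          · exact mul_nonneg (inv_nonneg.2 hM0.le) (le_max_right _ _)
          · rw [inv_mul_le_one₀ hM0]
            exact max_le (by linarith [hMb x, hε.le]) hM0.le
        · have hsub : Function.support ⇑(M⁻¹ • p₃) ⊆ {x | r + ε ≤ g x} := by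
            intro x hx
            simp only [Function.mem_support, CompactlySupportedContinuousMap.smul_apply, compCc_apply, p₃, hφ₃,
              ContinuousMap.coe_mk, smul_eq_mul] at hx
            by_contra hcx
            simp only [Set.mem_setOf_eq, not_le] at hcx
            rw [max_eq_right (by linarith)] at hx
            simp at hx
          have hclosed : IsClosed {x | r + ε ≤ g x} :=
            isClosed_le continuous_const g.continuous
          refine (closure_minimal hsub hclosed).trans ?_
          intro x hx
          simp only [Set.mem_setOf_eq] at hx ⊢
          linarith
      have hμV : qiOpen ρ {x | r + ε/2 < g x} = 0 := by
        rw [← qiMeas_of_isOpen (isOpen_lt_set g (r + ε/2))]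
        exact mu_zero_of_rr_lt hρ hS (by rw [← hr]; linarith)
      have := le_qiOpen (ρ := ρ) hadm
      rw [hμV, le_zero_iff, ENNReal.ofReal_eq_zero, hρ.smul] at this
      by_contra hcon
      push_neg at hcon
      have : 0 < M⁻¹ * ρ p₃ := mul_pos (inv_pos.2 hM0) hcon
      linarith
    rw [hsplit]
    linarith
  · -- lower bound : rr ρ g ≤ ρ g
    refine csSup_le (Set.insert_nonempty _ _) (fun t ht => ?_)
    rcases Set.mem_insert_iff.1 ht with h | h
    · exact h ▸ hρ.pos g hg
    · obtain ⟨ht0, hμ⟩ := h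
      by_contra hc
      push_neg at hc
      -- pick b with ρ g / t < b < 1
      set b : ℝ := max (ρ g / t) 0 + (1 - max (ρ g / t) 0) / 2 with hb
      have hρg0 : 0 ≤ ρ g := hρ.pos g hg
      have hm1 : max (ρ g / t) 0 < 1 := by
        rw [max_lt_iff]
        constructor
        · rw [div_lt_one ht0]; exact hc
        · norm_num
      have hb1 : b < 1 := by rw [hb]; linarith
      have hb0 : 0 ≤ b := by
        have : 0 ≤ max (ρ g / t) 0 := le_max_right _ _
        rw [hb]; linarith
      have hbgt : ρ g / t < b := by
        have : ρ g / t ≤ max (ρ g / t) 0 := le_max_left _ _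
        rw [hb]; linarith
      -- get an admissible witness with ρ h > b
      rw [qiMeas_of_isOpen (isOpen_lt_set g t)] at hμ
      have hlt : ENNReal.ofReal b < qiOpen ρ {x | t < g x} := by
        rw [hμ]
        exact ENNReal.ofReal_lt_one.2 hb1
      rw [qiOpen, lt_iSup_iff] at hlt
      obtain ⟨h, hh⟩ := hlt
      by_cases hcond : (∀ x, 0 ≤ h x ∧ h x ≤ 1) ∧ tsupport ⇑h ⊆ {x | t < g x}
      swap
      · rw [iSup_neg hcond] at hh; exact absurd hh (by simp)
      rw [iSup_pos hcond] at hh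
      have hρh : b < ρ h := by
        by_contra hc2
        push_neg at hc2
        exact absurd (lt_of_lt_of_le hh (ENNReal.ofReal_le_ofReal hc2)) (lt_irrefl _)
      -- the comparison function w = min (g/t) 1 ∈ B(g)
      set φw : C(ℝ, ℝ) := ⟨fun s => min (max s 0 / t) 1,
        (((continuous_id.max continuous_const).div_const t).min continuous_const)⟩ with hφw
      have hφw0 : φw 0 = 0 := by
        simp only [hφw, ContinuousMap.coe_mk]
        rw [max_eq_right le_rfl, zero_div, min_eq_left zero_le_one]
      set w := compCc φw hφw0 g with hw
      have hwb : ∀ x, 0 ≤ w x ∧ w x ≤ 1 := fun x => by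
        simp only [hw, compCc_apply, hφw, ContinuousMap.coe_mk]
        constructor
        · have : (0:ℝ) ≤ max (g x) 0 / t := by positivity
          exact le_min this zero_le_one
        · exact min_le_right _ _
      have hw1 : ∀ x ∈ {x | t < g x}, w x = 1 := fun x hx => by
        simp only [Set.mem_setOf_eq] at hx
        simp only [hw, compCc_apply, hφw, ContinuousMap.coe_mk]
        rw [max_eq_left (by linarith), min_eq_right]
        rw [le_div_iff₀ ht0, one_mul]
        exact hx.le
      have h1 : ρ h ≤ ρ w := rho_le_of_one_on hρ hcond.1 hcond.2 hwb hw1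
      -- t • w ≤ g inside B(g)
      have h2 : ρ (t • w) ≤ ρ g := by
        refine mono_inB hρ ?_ (inB_self g) (fun x => ?_)
        · exact ⟨t • φw, by simp [hφw0], fun x => by
            simp [hw, CompactlySupportedContinuousMap.smul_apply, ContinuousMap.smul_apply, compCc_apply]⟩
        · simp only [CompactlySupportedContinuousMap.smul_apply, hw, compCc_apply, hφw, ContinuousMap.coe_mk, smul_eq_mul]
          rw [max_eq_left (hg x)]
          rcases le_total (g x) t with h' | h'
          · rw [min_eq_left (by rw [div_le_one ht0]; exact h')]
            rw [mul_div_cancel₀ _ ht0.ne']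
          · rw [min_eq_right (by rw [le_div_iff₀ ht0, one_mul]; exact h')]
            rw [mul_one]; exact h'
      rw [hρ.smul] at h2
      -- combine : t * b < t * ρ w ≤ ρ g, but also ρ g < b * t
      have hfin : t * b < ρ g :=
        lt_of_lt_of_le (mul_lt_mul_of_pos_left (lt_of_lt_of_le hρh h1) ht0) h2
      rw [div_lt_iff₀ ht0] at hbgt
      nlinarith
end Rep
section Witness

variable {X : Type*} [TopologicalSpace X] {ρ : C_c(X, ℝ) → ℝ}

/-- A continuous cutoff on `ℝ`: `1` on a compact `K`, supported inside an open `A ⊇ K`. -/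
lemma exists_cutoff {K A : Set ℝ} (hK : IsCompact K) (hA : IsOpen A) (hKA : K ⊆ A) :
    ∃ κ : C(ℝ, ℝ), (∀ s, 0 ≤ κ s ∧ κ s ≤ 1) ∧ (∀ s ∈ K, κ s = 1) ∧ tsupport ⇑κ ⊆ A := by
  rcases K.eq_empty_or_nonempty with hKe | hKne
  · refine ⟨0, fun s => by norm_num, fun s hs => by simp [hKe] at hs, ?_⟩
    rw [ContinuousMap.coe_zero, tsupport]
    simp
  · obtain ⟨δ, hδ, hsub⟩ := hK.exists_thickening_subset_open hA hKA
    refine ⟨⟨fun s => max (1 - (2/δ) * Metric.infDist s K) 0,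
      ((continuous_const.sub (continuous_const.mul
        (Metric.continuous_infDist_pt K))).max continuous_const)⟩, fun s => ?_, fun s hs => ?_, ?_⟩
    · constructor
      · exact le_max_right _ _
      · refine max_le ?_ zero_le_one
        have h1 : 0 ≤ Metric.infDist s K := Metric.infDist_nonneg
        have h2 : 0 ≤ (2/δ) * Metric.infDist s K := by positivity
        linarith
    · simp only [ContinuousMap.coe_mk, Metric.infDist_zero_of_mem hs]
      norm_num
    · have hsupp : Function.support (fun s => max (1 - (2/δ) * Metric.infDist s K) 0) ⊆
          Metric.thickening (δ/2) K := by
        intro s hs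
        simp only [Function.mem_support] at hs
        have h1 : 0 < 1 - (2/δ) * Metric.infDist s K := by
          rcases lt_or_ge 0 (1 - (2/δ) * Metric.infDist s K) with h | h
          · exact h
          · exact absurd (max_eq_right h) hs
        rw [Metric.mem_thickening_iff_infDist_lt hKne]
        have h3 : 2 / δ * Metric.infDist s K < 1 := by linarith
        rw [div_mul_eq_mul_div, div_lt_one hδ] at h3
        linarith
      have h2 : tsupport (fun s => max (1 - (2/δ) * Metric.infDist s K) 0) ⊆
          Metric.cthickening (δ/2) K :=
        closure_minimal (hsupp.trans (Metric.thickening_subset_cthickening _ _))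
          Metric.isClosed_cthickening
      exact h2.trans ((Metric.cthickening_subset_thickening' hδ (half_lt_self hδ) K).trans hsub)

/-- Extract an admissible function with `ρ h > 3/4` from an open set of measure `1`. -/
lemma exists_adm_big {O : Set X} (hO : IsOpen O) (h1 : qiMeas ρ O = 1) :
    ∃ h : C_c(X, ℝ), Adm O h ∧ (3/4 : ℝ) < ρ h := by
  rw [qiMeas_of_isOpen hO] at h1
  have hlt : ENNReal.ofReal (3/4) < qiOpen ρ O := by
    rw [h1]; exact ENNReal.ofReal_lt_one.2 (by norm_num)
  rw [qiOpen, lt_iSup_iff] at hlt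
  obtain ⟨h, hh⟩ := hlt
  by_cases hcond : (∀ x, 0 ≤ h x ∧ h x ≤ 1) ∧ tsupport ⇑h ⊆ O
  swap
  · rw [iSup_neg hcond] at hh; exact absurd hh (by simp)
  rw [iSup_pos hcond] at hh
  refine ⟨h, hcond, ?_⟩
  by_contra hc2
  push_neg at hc2
  exact absurd (lt_of_lt_of_le hh (ENNReal.ofReal_le_ofReal hc2)) (lt_irrefl _)

/-- Two disjoint open sets cannot both have measure `1`. -/
lemma not_both_one (hρ : IsQuasiIntegral ρ) (hX : qiOpen ρ (Set.univ : Set X) = 1)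
    {O₁ O₂ : Set X} (hO₁ : IsOpen O₁) (hO₂ : IsOpen O₂) (hd : ∀ x, x ∉ O₁ ∨ x ∉ O₂)
    (m₁ : qiMeas ρ O₁ = 1) (m₂ : qiMeas ρ O₂ = 1) : False := by
  obtain ⟨h₁, hc₁, hb₁⟩ := exists_adm_big hO₁ m₁
  obtain ⟨h₂, hc₂, hb₂⟩ := exists_adm_big hO₂ m₂
  have hdisj : ∀ x, h₁ x = 0 ∨ h₂ x = 0 := by
    intro x
    rcases hd x with h | h
    · exact Or.inl (image_eq_zero_of_notMem_tsupport (fun hc => h (hc₁.2 hc)))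
    · exact Or.inr (image_eq_zero_of_notMem_tsupport (fun hc => h (hc₂.2 hc)))
  have hadd : ρ (h₁ + h₂) = ρ h₁ + ρ h₂ :=
    disjoint_add hρ (fun x => (hc₁.1 x).1) (fun x => (hc₂.1 x).1) hdisj
  have hadm : Adm Set.univ (h₁ + h₂) := by
    refine ⟨fun x => ?_, Set.subset_univ _⟩
    rw [CompactlySupportedContinuousMap.add_apply]
    rcases hdisj x with h | h <;> rw [h]
    · simpa using hc₂.1 x
    · simpa using hc₁.1 x
  have := le_qiOpen (ρ := ρ) hadm
  rw [hX, ENNReal.ofReal_le_one, hadd] at this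
  linarith

end Witness
section Core

variable {X : Type*} [TopologicalSpace X] {ρ : C_c(X, ℝ) → ℝ}

lemma basics_pack (hρ : IsQuasiIntegral ρ) (hS : IsSimpleQI ρ)
    (hX : qiOpen ρ (Set.univ : Set X) = 1) (f : C_c(X, ℝ)) (hc : 0 ≤ ρ f) :
    ρ (pPart f) = ρ f ∧ ρ (nPart f) = 0 := by
  have hP := rho_eq_rr hρ hS hX (pPart_nonneg f)
  have hN := rho_eq_rr hρ hS hX (nPart_nonneg f)
  have hd := rho_decomp hρ f
  have hPn : 0 ≤ ρ (pPart f) := hρ.pos _ (pPart_nonneg f)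
  have hNn : 0 ≤ ρ (nPart f) := hρ.pos _ (nPart_nonneg f)
  have hnb : ¬(0 < ρ (pPart f) ∧ 0 < ρ (nPart f)) := by
    rintro ⟨h1, h2⟩
    set t := min (ρ (pPart f)) (ρ (nPart f)) / 2 with htdef
    have hmin : 0 < min (ρ (pPart f)) (ρ (nPart f)) := lt_min h1 h2
    have ht0 : 0 < t := by rw [htdef]; linarith
    have htP : t < ρ (pPart f) := by
      have := min_le_left (ρ (pPart f)) (ρ (nPart f)); rw [htdef]; linarith
    have htN : t < ρ (nPart f) := by
      have := min_le_right (ρ (pPart f)) (ρ (nPart f)); rw [htdef]; linarith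
    have m₁ : qiMeas ρ {x | t < pPart f x} = 1 :=
      mu_one_of_lt_rr hρ hX ht0 (hP ▸ htP)
    have m₂ : qiMeas ρ {x | t < nPart f x} = 1 :=
      mu_one_of_lt_rr hρ hX ht0 (hN ▸ htN)
    refine not_both_one hρ hX (isOpen_lt_set (pPart f) t) (isOpen_lt_set (nPart f) t)
      (fun x => ?_) m₁ m₂
    by_cases hx : t < pPart f x
    · right
      simp only [Set.mem_setOf_eq, nPart_apply, not_lt]
      have hfx : t < f x := by
        rcases lt_max_iff.1 hx with h | h
        · exact h
        · linarith
      refine max_le (by linarith) ht0.le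
    · exact Or.inl hx
  have hN0 : ρ (nPart f) = 0 := by
    rcases eq_or_lt_of_le hPn with h0 | h0
    · linarith
    · by_contra hcne
      exact hnb ⟨h0, lt_of_le_of_ne hNn (Ne.symm hcne)⟩
  exact ⟨by linarith, hN0⟩

lemma factF1 (hρ : IsQuasiIntegral ρ) (hS : IsSimpleQI ρ)
    (hX : qiOpen ρ (Set.univ : Set X) = 1) {f : C_c(X, ℝ)} (hc : 0 ≤ ρ f)
    {t : ℝ} (ht : ρ f < t) : qiMeas ρ {x | t < f x} = 0 := by
  obtain ⟨hP0, _⟩ := basics_pack hρ hS hX f hc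
  have ht0 : 0 < t := lt_of_le_of_lt hc ht
  have hset : {x | t < f x} = {x | t < pPart f x} := by
    ext x
    simp only [Set.mem_setOf_eq, pPart_apply, lt_max_iff]
    constructor
    · exact Or.inl
    · rintro (h | h)
      · exact h
      · linarith
  rw [hset]
  refine mu_zero_of_rr_lt hρ hS ?_
  have : rr ρ (pPart f) = ρ f := (rho_eq_rr hρ hS hX (pPart_nonneg f)).symm.trans hP0
  rw [this]
  exact ht

lemma factF2 (hρ : IsQuasiIntegral ρ) (hS : IsSimpleQI ρ)
    (hX : qiOpen ρ (Set.univ : Set X) = 1) {f : C_c(X, ℝ)} (hc : 0 ≤ ρ f)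
    {t : ℝ} (ht : 0 < t) : qiMeas ρ {x | f x < -t} = 0 := by
  obtain ⟨_, hN0⟩ := basics_pack hρ hS hX f hc
  have hset : {x | f x < -t} = {x | t < nPart f x} := by
    ext x
    simp only [Set.mem_setOf_eq, nPart_apply, lt_max_iff]
    constructor
    · intro h; exact Or.inl (by linarith)
    · rintro (h | h)
      · linarith
      · linarith
  rw [hset]
  refine mu_zero_of_rr_lt hρ hS ?_
  have : rr ρ (nPart f) = 0 := (rho_eq_rr hρ hS hX (nPart_nonneg f)).symm.trans hN0
  rw [this]
  exact ht

lemma claimC (hρ : IsQuasiIntegral ρ) (hS : IsSimpleQI ρ)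
    (hX : qiOpen ρ (Set.univ : Set X) = 1) {f : C_c(X, ℝ)} (hc : 0 ≤ ρ f)
    {δ : ℝ} (hδ0 : 0 < δ) (hδc : δ ≤ ρ f) :
    qiMeas ρ {x | ρ f - δ < f x ∧ f x < ρ f + δ} = 1 := by
  have hopen : IsOpen {x | ρ f - δ < f x ∧ f x < ρ f + δ} := by
    rw [Set.setOf_and]
    exact (isOpen_lt continuous_const f.continuous).inter
      (isOpen_lt f.continuous continuous_const)
  rcases hS _ (Or.inl hopen) with h0 | h1
  swap
  · exact h1
  exfalso
  have hcpos : 0 < ρ f := lt_of_lt_of_le hδ0 hδc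
  -- the tent function η
  set η : C(ℝ, ℝ) := ⟨fun s => max (1 - |s - ρ f| / δ) 0,
    ((continuous_const.sub ((continuous_id.sub continuous_const).abs.div_const δ)).max
      continuous_const)⟩ with hηdef
  have hη0 : η 0 = 0 := by
    simp only [hηdef, ContinuousMap.coe_mk, zero_sub, abs_neg, abs_of_nonneg hc]
    refine max_eq_right ?_
    rw [sub_nonpos, le_div_iff₀ hδ0, one_mul]
    exact hδc
  set u := compCc η hη0 f with hudef
  have hu_nonneg : ∀ x, 0 ≤ u x := fun x => le_max_right _ _
  have hρu : ρ u = 0 := by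
    rw [rho_eq_rr hρ hS hX hu_nonneg]
    refine le_antisymm ?_ (rr_nonneg hρ u)
    refine csSup_le (Set.insert_nonempty _ _) (fun t ht => ?_)
    rcases Set.mem_insert_iff.1 ht with h | h
    · exact h.le
    · exfalso
      obtain ⟨ht0, hμ⟩ := h
      have hsub : {x | t < u x} ⊆ {x | ρ f - δ < f x ∧ f x < ρ f + δ} := by
        intro x hx
        simp only [Set.mem_setOf_eq, hudef, compCc_apply, hηdef, ContinuousMap.coe_mk] at hx ⊢
        have h2 : t < 1 - |f x - ρ f| / δ := by
          rcases lt_max_iff.1 hx with h | h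
          · exact h
          · linarith
        have h3 : |f x - ρ f| / δ < 1 := by linarith
        rw [div_lt_one hδ0] at h3
        obtain ⟨h4, h5⟩ := abs_lt.1 h3
        exact ⟨by linarith, by linarith⟩
      have hcontra : (1:ℝ≥0∞) ≤ 0 := by
        calc (1:ℝ≥0∞) = qiMeas ρ {x | t < u x} := hμ.symm
        _ = qiOpen ρ {x | t < u x} := qiMeas_of_isOpen (isOpen_lt_set u t)
        _ ≤ qiOpen ρ {x | ρ f - δ < f x ∧ f x < ρ f + δ} := qiOpen_mono hsub
        _ = qiMeas ρ {x | ρ f - δ < f x ∧ f x < ρ f + δ} := (qiMeas_of_isOpen hopen).symm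
        _ = 0 := h0
      simp at hcontra
  -- the modified function v
  set θ : C(ℝ, ℝ) := ContinuousMap.id ℝ - δ • η with hθdef
  have hθ0 : θ 0 = 0 := by
    simp [hθdef, hη0]
  set v := compCc θ hθ0 f with hvdef
  have hvval : ∀ x, v x = f x - δ * max (1 - |f x - ρ f| / δ) 0 := fun x => by
    simp [hvdef, compCc_apply, hθdef, hηdef]
  have hρv : ρ f = ρ v := by
    have hInBu : InB f (δ • u) := ⟨δ • η, by simp [hη0], fun x => by
      simp [hudef, CompactlySupportedContinuousMap.smul_apply, ContinuousMap.smul_apply, compCc_apply]⟩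
    have hadd := hρ.add f v (δ • u) (inB_compCc _ _ _) hInBu
    have hsum : v + δ • u = f := by
      ext x
      simp only [CompactlySupportedContinuousMap.add_apply, CompactlySupportedContinuousMap.smul_apply, hvval x, hudef, compCc_apply, hηdef,
        ContinuousMap.coe_mk, smul_eq_mul]
      ring
    rw [hsum] at hadd
    rw [hadd, hρ.smul, hρu]
    ring
  have hPv : ρ (pPart v) ≤ ρ f - δ := by
    rw [rho_eq_rr hρ hS hX (pPart_nonneg v)]
    refine csSup_le (Set.insert_nonempty _ _) (fun t ht => ?_)
    rcases Set.mem_insert_iff.1 ht with h | h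
    · rw [h]; linarith
    · obtain ⟨ht0, hμ⟩ := h
      by_contra hcon
      push_neg at hcon
      set b' := min (ρ f + δ) ((t + ρ f + δ) / 2) with hb'
      have hb'c : ρ f < b' := by
        rw [hb', lt_min_iff]
        constructor <;> linarith
      have hsub : {x | t < pPart v x} ⊆ {x | b' < f x} := by
        intro x hx
        simp only [Set.mem_setOf_eq, pPart_apply] at hx ⊢
        have hvx : t < v x := by
          rcases lt_max_iff.1 hx with h | h
          · exact h
          · linarith
        rw [hvval x] at hvx
        set s := f x with hs
        rcases le_or_gt δ |s - ρ f| with hcase | hcase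
        · have hmax0 : max (1 - |s - ρ f| / δ) 0 = 0 := by
            refine max_eq_right ?_
            rw [sub_nonpos, le_div_iff₀ hδ0, one_mul]
            exact hcase
          rw [hmax0, mul_zero, sub_zero] at hvx
          rcases le_abs.1 hcase with h | h
          · have : b' ≤ (t + ρ f + δ) / 2 := min_le_right _ _
            linarith
          · linarith
        · have hmax : max (1 - |s - ρ f| / δ) 0 = 1 - |s - ρ f| / δ := by
            refine max_eq_left ?_
            rw [sub_nonneg, div_le_one hδ0]
            exact hcase.le
          rw [hmax] at hvx
          have hvx2 : t < s - δ + |s - ρ f| := by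
            have hd : δ * (1 - |s - ρ f| / δ) = δ - |s - ρ f| := by
              field_simp
            nlinarith [hvx, hd]
          rcases le_or_gt s (ρ f) with hsc | hsc
          · exfalso
            rw [abs_of_nonpos (by linarith)] at hvx2
            linarith
          · rw [abs_of_pos (by linarith)] at hvx2
            have : b' ≤ (t + ρ f + δ) / 2 := min_le_right _ _
            linarith
      have hμ0 : qiMeas ρ {x | b' < f x} = 0 := factF1 hρ hS hX hc hb'c
      have hcontra : (1:ℝ≥0∞) ≤ 0 := by
        calc (1:ℝ≥0∞) = qiMeas ρ {x | t < pPart v x} := hμ.symm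
        _ = qiOpen ρ {x | t < pPart v x} := qiMeas_of_isOpen (isOpen_lt_set (pPart v) t)
        _ ≤ qiOpen ρ {x | b' < f x} := qiOpen_mono hsub
        _ = qiMeas ρ {x | b' < f x} := (qiMeas_of_isOpen (isOpen_lt_set f b')).symm
        _ = 0 := hμ0
      simp at hcontra
  have hNv : 0 ≤ ρ (nPart v) := hρ.pos _ (nPart_nonneg v)
  have hvd := rho_decomp hρ v
  linarith [hρv, hvd, hPv, hNv, hδ0]

end Core
section E2

variable {X : Type*} [TopologicalSpace X] {ρ : C_c(X, ℝ) → ℝ}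

lemma factE2 (hρ : IsQuasiIntegral ρ) (hS : IsSimpleQI ρ)
    (hX : qiOpen ρ (Set.univ : Set X) = 1) {f : C_c(X, ℝ)} (hc : 0 ≤ ρ f)
    (ψ : C(ℝ, ℝ)) (hψ0 : ψ 0 = 0) {t : ℝ} (ht0 : 0 < t) (htc : ψ (ρ f) ≤ t) :
    qiMeas ρ {x | t < ψ (f x)} = 0 := by
  have hopen : IsOpen {x | t < ψ (f x)} :=
    isOpen_lt continuous_const (ψ.continuous.comp f.continuous)
  rw [qiMeas_of_isOpen hopen]
  refine le_antisymm (qiOpen_le fun h hh => ?_) (zero_le)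
  rw [le_zero_iff, ENNReal.ofReal_eq_zero]
  by_cases hKe : tsupport ⇑h = ∅
  · have hzero : h = 0 := by
      apply CompactlySupportedContinuousMap.ext
      intro x
      simpa using image_eq_zero_of_notMem_tsupport (f := ⇑h) (by simp [hKe])
    rw [hzero, rho_zero hρ]
  · set C := ⇑f '' tsupport ⇑h with hCdef
    have hCcomp : IsCompact C := h.hasCompactSupport'.image f.continuous
    have hCne : C.Nonempty := (Set.nonempty_iff_ne_empty.2 hKe).image _
    have hmcont : Continuous fun s : ℝ => min |s| |s - ρ f| :=
      continuous_abs.min ((continuous_id.sub continuous_const).abs)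
    obtain ⟨s₀, hs₀C, hmin⟩ := hCcomp.exists_isMinOn hCne hmcont.continuousOn
    set ε := min |s₀| |s₀ - ρ f| with hεdef
    have hCprop : ∀ s ∈ C, t < ψ s := by
      rintro s ⟨x, hxts, rfl⟩
      exact hh.2 hxts
    have hε0 : 0 < ε := by
      have hts₀ := hCprop s₀ hs₀C
      have h1 : s₀ ≠ 0 := by
        intro hcon
        rw [hcon, hψ0] at hts₀
        linarith
      have h2 : s₀ ≠ ρ f := by
        intro hcon
        rw [hcon] at hts₀
        linarith
      exact lt_min (abs_pos.2 h1) (abs_pos.2 (sub_ne_zero.2 h2))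
    have hCbd : ∀ s ∈ C, ε ≤ |s| ∧ ε ≤ |s - ρ f| := by
      intro s hs
      have h1 : ε ≤ min |s| |s - ρ f| := hmin hs
      exact ⟨h1.trans (min_le_left _ _), h1.trans (min_le_right _ _)⟩
    set A₁ := Set.Iio (-(ε/2)) with hA₁
    set A₂ := Set.Ioo (ε/2) (ρ f - ε/2) with hA₂
    set A₃ := Set.Ioi (ρ f + ε/2) with hA₃
    have hcover : ∀ s ∈ C, s ∈ A₁ ∨ s ∈ A₂ ∨ s ∈ A₃ := by
      intro s hs
      obtain ⟨h1, h2⟩ := hCbd s hs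
      rcases lt_or_ge s 0 with hs0 | hs0
      · left
        rw [abs_of_neg hs0] at h1
        simp only [hA₁, Set.mem_Iio]
        linarith
      · rw [abs_of_nonneg hs0] at h1
        rcases lt_or_ge s (ρ f) with hsc | hsc
        · right; left
          rw [abs_of_neg (by linarith)] at h2
          simp only [hA₂, Set.mem_Ioo]
          constructor <;> linarith
        · right; right
          rw [abs_of_nonneg (by linarith)] at h2
          simp only [hA₃, Set.mem_Ioi]
          linarith
    -- pairwise disjointness of the intervals
    have hd12 : ∀ s, s ∈ A₁ → s ∉ A₂ := fun s h1 h2 => by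
      simp only [hA₁, Set.mem_Iio] at h1
      simp only [hA₂, Set.mem_Ioo] at h2
      linarith [h2.1]
    have hd13 : ∀ s, s ∈ A₁ → s ∉ A₃ := fun s h1 h3 => by
      simp only [hA₁, Set.mem_Iio] at h1
      simp only [hA₃, Set.mem_Ioi] at h3
      linarith
    have hd23 : ∀ s, s ∈ A₂ → s ∉ A₃ := fun s h2 h3 => by
      simp only [hA₂, Set.mem_Ioo] at h2
      simp only [hA₃, Set.mem_Ioi] at h3
      linarith [h2.2]
    -- measure zero of preimages
    have z₁ : qiMeas ρ (⇑f ⁻¹' A₁) = 0 := by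
      have : ⇑f ⁻¹' A₁ = {x | f x < -(ε/2)} := rfl
      rw [this]
      exact factF2 hρ hS hX hc (by linarith)
    have z₃ : qiMeas ρ (⇑f ⁻¹' A₃) = 0 := by
      have : ⇑f ⁻¹' A₃ = {x | ρ f + ε/2 < f x} := rfl
      rw [this]
      exact factF1 hρ hS hX hc (by linarith)
    have hA₂open : IsOpen (⇑f ⁻¹' A₂) := isOpen_Ioo.preimage f.continuous
    have z₂ : qiMeas ρ (⇑f ⁻¹' A₂) = 0 := by
      rcases le_or_gt (ρ f - ε/2) (ε/2) with hce | hce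
      · have : A₂ = ∅ := Set.Ioo_eq_empty (not_lt.2 hce)
        rw [this, Set.preimage_empty, qiMeas_of_isOpen isOpen_empty, qiOpen_empty hρ]
      · have hI : qiMeas ρ {x | ρ f - ε/2 < f x ∧ f x < ρ f + ε/2} = 1 :=
          claimC hρ hS hX hc (by linarith) (by linarith)
        rcases hS _ (Or.inl hA₂open) with h0 | h1
        · exact h0
        · exfalso
          have hIopen : IsOpen {x | ρ f - ε/2 < f x ∧ f x < ρ f + ε/2} := by
            rw [Set.setOf_and]
            exact (isOpen_lt continuous_const f.continuous).inter
              (isOpen_lt f.continuous continuous_const)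
          refine not_both_one hρ hX hA₂open hIopen (fun x => ?_) h1 hI
          by_cases hx : x ∈ ⇑f ⁻¹' A₂
          · right
            simp only [hA₂, Set.mem_preimage, Set.mem_Ioo] at hx
            simp only [Set.mem_setOf_eq, not_and, not_lt]
            intro hgt
            linarith [hx.2]
          · exact Or.inl hx
    -- compact pieces of C and cutoffs
    have hC₁ : IsCompact (C \ (A₂ ∪ A₃)) := hCcomp.diff (IsOpen.union isOpen_Ioo isOpen_Ioi)
    have hC₂ : IsCompact (C \ (A₁ ∪ A₃)) := hCcomp.diff (IsOpen.union isOpen_Iio isOpen_Ioi)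
    have hC₃ : IsCompact (C \ (A₁ ∪ A₂)) := hCcomp.diff (IsOpen.union isOpen_Iio isOpen_Ioo)
    have hC₁sub : C \ (A₂ ∪ A₃) ⊆ A₁ := by
      rintro s ⟨hsC, hsn⟩
      rcases hcover s hsC with h | h | h
      · exact h
      · exact absurd (Set.mem_union_left _ h) hsn
      · exact absurd (Set.mem_union_right _ h) hsn
    have hC₂sub : C \ (A₁ ∪ A₃) ⊆ A₂ := by
      rintro s ⟨hsC, hsn⟩
      rcases hcover s hsC with h | h | h
      · exact absurd (Set.mem_union_left _ h) hsn
      · exact h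
      · exact absurd (Set.mem_union_right _ h) hsn
    have hC₃sub : C \ (A₁ ∪ A₂) ⊆ A₃ := by
      rintro s ⟨hsC, hsn⟩
      rcases hcover s hsC with h | h | h
      · exact absurd (Set.mem_union_left _ h) hsn
      · exact absurd (Set.mem_union_right _ h) hsn
      · exact h
    obtain ⟨κ₁, hκ₁b, hκ₁1, hκ₁s⟩ := exists_cutoff hC₁ isOpen_Iio hC₁sub
    obtain ⟨κ₂, hκ₂b, hκ₂1, hκ₂s⟩ := exists_cutoff hC₂ isOpen_Ioo hC₂sub
    obtain ⟨κ₃, hκ₃b, hκ₃1, hκ₃s⟩ := exists_cutoff hC₃ isOpen_Ioi hC₃sub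
    -- the pieces of h
    set Hmk : C(ℝ, ℝ) → C_c(X, ℝ) := fun κ =>
      ⟨⟨fun x => h x * κ (f x), h.continuous.mul (κ.continuous.comp f.continuous)⟩,
        h.hasCompactSupport'.mul_right⟩ with hHmk
    have hHval : ∀ (κ : C(ℝ, ℝ)) (x : X), Hmk κ x = h x * κ (f x) := fun _ _ => rfl
    -- vanishing across pieces
    have hκzero : ∀ (κ : C(ℝ, ℝ)) (A : Set ℝ) (x : X), tsupport ⇑κ ⊆ A → f x ∉ A →
        κ (f x) = 0 := fun κ A x hsub hnA =>
      image_eq_zero_of_notMem_tsupport (fun hmem => hnA (hsub hmem))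
    have hsupp_mem : ∀ x, h x ≠ 0 → f x ∈ C := by
      intro x hx
      exact ⟨x, subset_tsupport _ hx, rfl⟩
    -- sum decomposition
    have hone : ∀ x, h x ≠ 0 → κ₁ (f x) + (κ₂ (f x) + κ₃ (f x)) = 1 := by
      intro x hhx
      rcases hcover (f x) (hsupp_mem x hhx) with hm | hm | hm
      · rw [hκ₁1 _ ⟨hsupp_mem x hhx, fun hu => by
            rcases hu with h' | h'
            · exact hd12 _ hm h'
            · exact hd13 _ hm h'⟩,
          hκzero κ₂ A₂ x hκ₂s (hd12 _ hm), hκzero κ₃ A₃ x hκ₃s (hd13 _ hm)]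
        ring
      · rw [hκ₂1 _ ⟨hsupp_mem x hhx, fun hu => by
            rcases hu with h' | h'
            · exact hd12 _ h' hm
            · exact hd23 _ hm h'⟩,
          hκzero κ₁ A₁ x hκ₁s (fun h' => hd12 _ h' hm),
          hκzero κ₃ A₃ x hκ₃s (hd23 _ hm)]
        ring
      · rw [hκ₃1 _ ⟨hsupp_mem x hhx, fun hu => by
            rcases hu with h' | h'
            · exact hd13 _ h' hm
            · exact hd23 _ h' hm⟩,
          hκzero κ₁ A₁ x hκ₁s (fun h' => hd13 _ h' hm),
          hκzero κ₂ A₂ x hκ₂s (fun h' => hd23 _ h' hm)]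
        ring
    have hsum : h = Hmk κ₁ + (Hmk κ₂ + Hmk κ₃) := by
      apply CompactlySupportedContinuousMap.ext
      intro x
      simp only [CompactlySupportedContinuousMap.add_apply, hHval]
      by_cases hhx : h x = 0
      · simp [hhx]
      · calc h x = h x * (κ₁ (f x) + (κ₂ (f x) + κ₃ (f x))) := by rw [hone x hhx, mul_one]
        _ = h x * κ₁ (f x) + (h x * κ₂ (f x) + h x * κ₃ (f x)) := by ring
    -- cross-vanishing between different pieces
    have hκd : ∀ (κ κ' : C(ℝ, ℝ)) (A A' : Set ℝ), tsupport ⇑κ ⊆ A → tsupport ⇑κ' ⊆ A' →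
        (∀ s, s ∈ A → s ∉ A') → ∀ x : X, κ (f x) = 0 ∨ κ' (f x) = 0 := by
      intro κ κ' A A' hκA hκ'A' hAA' x
      by_cases hz : κ (f x) = 0
      · exact Or.inl hz
      · refine Or.inr (hκzero κ' A' x hκ'A' ?_)
        exact hAA' _ (hκA (subset_tsupport _ hz))
    have hn : ∀ κ : C(ℝ, ℝ), (∀ s, 0 ≤ κ s ∧ κ s ≤ 1) → ∀ x, 0 ≤ Hmk κ x := by
      intro κ hκb x
      rw [hHval]
      exact mul_nonneg (hh.1 x).1 (hκb (f x)).1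
    have e23 : ρ (Hmk κ₂ + Hmk κ₃) = ρ (Hmk κ₂) + ρ (Hmk κ₃) := by
      refine disjoint_add hρ (hn κ₂ hκ₂b) (hn κ₃ hκ₃b) (fun x => ?_)
      refine (hκd κ₂ κ₃ A₂ A₃ hκ₂s hκ₃s hd23 x).imp (fun h0 => ?_) (fun h0 => ?_) <;>
        rw [hHval, h0, mul_zero]
    have e123 : ρ (Hmk κ₁ + (Hmk κ₂ + Hmk κ₃)) = ρ (Hmk κ₁) + ρ (Hmk κ₂ + Hmk κ₃) := by
      refine disjoint_add hρ (hn κ₁ hκ₁b) (fun x => by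
        rw [CompactlySupportedContinuousMap.add_apply]
        exact add_nonneg (hn κ₂ hκ₂b x) (hn κ₃ hκ₃b x)) (fun x => ?_)
      by_cases hz : κ₁ (f x) = 0
      · exact Or.inl (by rw [hHval, hz, mul_zero])
      · have hmem : f x ∈ A₁ := hκ₁s (subset_tsupport _ hz)
        refine Or.inr ?_
        rw [CompactlySupportedContinuousMap.add_apply, hHval, hHval, hκzero κ₂ A₂ x hκ₂s (hd12 _ hmem),
          hκzero κ₃ A₃ x hκ₃s (hd13 _ hmem)]
        ring
    -- each piece has nonpositive integral
    have hbound : ∀ (κ : C(ℝ, ℝ)) (A : Set ℝ), (∀ s, 0 ≤ κ s ∧ κ s ≤ 1) →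
        tsupport ⇑κ ⊆ A → IsOpen (⇑f ⁻¹' A) → qiMeas ρ (⇑f ⁻¹' A) = 0 → ρ (Hmk κ) ≤ 0 := by
      intro κ A hκb hκA hAop hA0
      have hadm : Adm (⇑f ⁻¹' A) (Hmk κ) := by
        constructor
        · intro x
          refine ⟨hn κ hκb x, ?_⟩
          rw [hHval]
          nlinarith [(hh.1 x).1, (hh.1 x).2, (hκb (f x)).1, (hκb (f x)).2]
        · have hs1 : Function.support ⇑(Hmk κ) ⊆ ⇑f ⁻¹' (tsupport ⇑κ) := by
            intro x hx
            rw [Function.mem_support, hHval] at hx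
            have : κ (f x) ≠ 0 := fun h0 => hx (by rw [h0, mul_zero])
            exact subset_tsupport _ this
          have hs2 : IsClosed (⇑f ⁻¹' (tsupport ⇑κ)) :=
            (isClosed_tsupport _).preimage f.continuous
          exact (closure_minimal hs1 hs2).trans (Set.preimage_mono hκA)
      have := le_qiOpen (ρ := ρ) hadm
      rw [← qiMeas_of_isOpen hAop, hA0, le_zero_iff, ENNReal.ofReal_eq_zero] at this
      exact this
    have hb₁ : ρ (Hmk κ₁) ≤ 0 :=
      hbound κ₁ A₁ hκ₁b hκ₁s (isOpen_Iio.preimage f.continuous) z₁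
    have hb₂ : ρ (Hmk κ₂) ≤ 0 := hbound κ₂ A₂ hκ₂b hκ₂s hA₂open z₂
    have hb₃ : ρ (Hmk κ₃) ≤ 0 :=
      hbound κ₃ A₃ hκ₃b hκ₃s (isOpen_Ioi.preimage f.continuous) z₃
    calc ρ h = ρ (Hmk κ₁ + (Hmk κ₂ + Hmk κ₃)) := by rw [← hsum]
    _ = ρ (Hmk κ₁) + ρ (Hmk κ₂ + Hmk κ₃) := e123
    _ = ρ (Hmk κ₁) + (ρ (Hmk κ₂) + ρ (Hmk κ₃)) := by rw [e23]
    _ ≤ 0 := by linarith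

end E2
section Main

variable {X : Type*} [TopologicalSpace X] {ρ : C_c(X, ℝ) → ℝ}

lemma core_nonneg (hρ : IsQuasiIntegral ρ) (hS : IsSimpleQI ρ)
    (hX : qiOpen ρ (Set.univ : Set X) = 1) {f : C_c(X, ℝ)} (hc : 0 ≤ ρ f)
    (ψ : C(ℝ, ℝ)) (hψ0 : ψ 0 = 0) (hψpos : ∀ s, 0 ≤ ψ s) :
    ρ (compCc ψ hψ0 f) = ψ (ρ f) := by
  set g := compCc ψ hψ0 f with hgdef
  have hgval : ∀ x, g x = ψ (f x) := fun x => rfl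
  have hgpos : ∀ x, 0 ≤ g x := fun x => hψpos (f x)
  rw [rho_eq_rr hρ hS hX hgpos]
  have hE2 : ∀ t : ℝ, 0 < t → ψ (ρ f) ≤ t → qiMeas ρ {x | t < g x} = 0 := by
    intro t ht0 htc
    have : {x | t < g x} = {x | t < ψ (f x)} := rfl
    rw [this]
    exact factE2 hρ hS hX hc ψ hψ0 ht0 htc
  have hub : rr ρ g ≤ ψ (ρ f) := by
    refine csSup_le (Set.insert_nonempty _ _) (fun t ht => ?_)
    rcases Set.mem_insert_iff.1 ht with h | h
    · rw [h]; exact hψpos _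
    · obtain ⟨ht0, hμ⟩ := h
      by_contra hcon
      push_neg at hcon
      rw [hE2 t ht0 hcon.le] at hμ
      exact one_ne_zero hμ.symm
  refine le_antisymm hub ?_
  rcases eq_or_lt_of_le (hψpos (ρ f)) with h0 | h0
  · rw [← h0]; exact rr_nonneg hρ g
  · by_contra hcon
    push_neg at hcon
    -- pick t strictly between max (rr ρ g) 0 and ψ (ρ f)
    set t := (max (rr ρ g) 0 + ψ (ρ f)) / 2 with htdef
    have hrr0 : 0 ≤ rr ρ g := rr_nonneg hρ g
    have hmax : max (rr ρ g) 0 = rr ρ g := max_eq_left hrr0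
    have ht0 : 0 < t := by rw [htdef, hmax]; linarith
    have htlt : t < ψ (ρ f) := by rw [htdef, hmax]; linarith
    have htgt : rr ρ g < t := by rw [htdef, hmax]; linarith
    -- E1 : the measure of {t < g} is 1
    have hcpos : 0 < ρ f ∨ ρ f = 0 := by
      rcases eq_or_lt_of_le hc with h | h
      · exact Or.inr h.symm
      · exact Or.inl h
    rcases hcpos with hcpos | hczero
    swap
    · rw [hczero, hψ0] at htlt; linarith
    -- continuity of ψ at ρ f
    have hV : IsOpen (⇑ψ ⁻¹' Set.Ioi t) := isOpen_Ioi.preimage ψ.continuous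
    have hVmem : ρ f ∈ ⇑ψ ⁻¹' Set.Ioi t := htlt
    obtain ⟨δ, hδ0, hball⟩ := Metric.isOpen_iff.1 hV _ hVmem
    set δ' := min δ (ρ f) with hδ'def
    have hδ'0 : 0 < δ' := lt_min hδ0 hcpos
    have hδ'c : δ' ≤ ρ f := min_le_right _ _
    have hW : qiMeas ρ {x | ρ f - δ' < f x ∧ f x < ρ f + δ'} = 1 :=
      claimC hρ hS hX hc hδ'0 hδ'c
    have hsub : {x | ρ f - δ' < f x ∧ f x < ρ f + δ'} ⊆ {x | t < g x} := by
      rintro x ⟨h1, h2⟩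
      have hmem : f x ∈ Metric.ball (ρ f) δ := by
        rw [Metric.mem_ball, Real.dist_eq, abs_lt]
        have : δ' ≤ δ := min_le_left _ _
        constructor <;> linarith
      have := hball hmem
      simpa [hgval] using this
    have hone : qiMeas ρ {x | t < g x} = 1 := by
      rw [qiMeas_of_isOpen (isOpen_lt_set g t)]
      refine le_antisymm (le_trans (qiOpen_mono (Set.subset_univ _)) hX.le) ?_
      calc (1:ℝ≥0∞) = qiMeas ρ {x | ρ f - δ' < f x ∧ f x < ρ f + δ'} := hW.symm
      _ = qiOpen ρ {x | ρ f - δ' < f x ∧ f x < ρ f + δ'} := by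
          refine qiMeas_of_isOpen ?_
          rw [Set.setOf_and]
          exact (isOpen_lt continuous_const f.continuous).inter
            (isOpen_lt f.continuous continuous_const)
      _ ≤ qiOpen ρ {x | t < g x} := qiOpen_mono hsub
    have : t ≤ rr ρ g := le_csSup (bddAbove_rr ρ hρ g) (Set.mem_insert_of_mem _ ⟨ht0, hone⟩)
    linarith

lemma core_any (hρ : IsQuasiIntegral ρ) (hS : IsSimpleQI ρ)
    (hX : qiOpen ρ (Set.univ : Set X) = 1) {f : C_c(X, ℝ)} (hc : 0 ≤ ρ f)
    (φ : C(ℝ, ℝ)) (hφ0 : φ 0 = 0) :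
    ρ (compCc φ hφ0 f) = φ (ρ f) := by
  set ψp : C(ℝ, ℝ) := ⟨fun s => max (φ s) 0, (φ.continuous.max continuous_const)⟩ with hψp
  set ψn : C(ℝ, ℝ) := ⟨fun s => max (-φ s) 0, ((φ.continuous.neg).max continuous_const)⟩ with hψn
  have hψp0 : ψp 0 = 0 := by simp [hψp, hφ0]
  have hψn0 : ψn 0 = 0 := by simp [hψn, hφ0]
  set k := compCc φ hφ0 f with hk
  have hpeq : pPart k = compCc ψp hψp0 f := rfl
  have hneq : nPart k = compCc ψn hψn0 f := rfl
  have hd := rho_decomp hρ k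
  rw [hd, hpeq, hneq, core_nonneg hρ hS hX hc ψp hψp0 (fun s => le_max_right _ _),
    core_nonneg hρ hS hX hc ψn hψn0 (fun s => le_max_right _ _)]
  simp only [hψp, hψn, ContinuousMap.coe_mk]
  rcases le_total (φ (ρ f)) 0 with h | h
  · rw [max_eq_right h, max_eq_left (by linarith)]; ring
  · rw [max_eq_left h, max_eq_right (by linarith)]; ring

lemma rho_all_zero (hρ : IsQuasiIntegral ρ) (hX0 : qiOpen ρ (Set.univ : Set X) = 0)
    (g : C_c(X, ℝ)) : ρ g = 0 := by
  have hnn : ∀ (w : C_c(X, ℝ)), (∀ x, 0 ≤ w x) → ρ w = 0 := by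
    intro w hw
    obtain ⟨M, hM0, hMb⟩ := exists_bound w
    have hadm : Adm Set.univ (M⁻¹ • w) := by
      refine ⟨fun x => ?_, Set.subset_univ _⟩
      rw [CompactlySupportedContinuousMap.smul_apply, smul_eq_mul]
      constructor
      · exact mul_nonneg (inv_nonneg.2 hM0.le) (hw x)
      · rw [inv_mul_le_one₀ hM0]
        exact hMb x
    have := le_qiOpen (ρ := ρ) hadm
    rw [hX0, le_zero_iff, ENNReal.ofReal_eq_zero, hρ.smul] at this
    have h1 : ρ w ≤ 0 := by
      by_contra hcon
      push_neg at hcon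
      have : 0 < M⁻¹ * ρ w := mul_pos (inv_pos.2 hM0) hcon
      linarith
    exact le_antisymm h1 (hρ.pos w hw)
  rw [rho_decomp hρ g, hnn (pPart g) (pPart_nonneg g), hnn (nPart g) (nPart_nonneg g)]
  ring

/-- (i) implies (ii). -/
theorem simple_to_ii (hρ : IsQuasiIntegral ρ) (hS : IsSimpleQI ρ)
    (φ : C(ℝ, ℝ)) (hφ : φ 0 = 0) (f : C_c(X, ℝ)) :
    ρ (compCc φ hφ f) = φ (ρ f) := by
  rcases hS Set.univ (Or.inl isOpen_univ) with h0 | h1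
  · rw [qiMeas_of_isOpen isOpen_univ] at h0
    rw [rho_all_zero hρ h0, rho_all_zero hρ h0, hφ]
  · rw [qiMeas_of_isOpen isOpen_univ] at h1
    rcases le_or_gt 0 (ρ f) with hc | hc
    · exact core_any hρ hS h1 hc φ hφ
    · set f' := (-1 : ℝ) • f with hf'
      have hρf' : ρ f' = -ρ f := by rw [hf', hρ.smul]; ring
      have hc' : 0 ≤ ρ f' := by rw [hρf']; linarith
      set φ' : C(ℝ, ℝ) := φ.comp ⟨fun s => -s, continuous_neg⟩ with hφ'
      have hφ'0 : φ' 0 = 0 := by simp [hφ', hφ]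
      have hcomp : compCc φ hφ f = compCc φ' hφ'0 f' := by
        apply CompactlySupportedContinuousMap.ext
        intro x
        simp only [compCc_apply, hφ', ContinuousMap.comp_apply, ContinuousMap.coe_mk, hf',
          CompactlySupportedContinuousMap.smul_apply, smul_eq_mul]
        norm_num
      rw [hcomp, core_any hρ hS h1 hc' φ' hφ'0, hρf']
      simp [hφ']

end Main
section Converse

variable {X : Type*} [TopologicalSpace X] {ρ : C_c(X, ℝ) → ℝ}

/-- The square root composition. -/
noncomputable def sqrtCc (h : C_c(X, ℝ)) : C_c(X, ℝ) :=
  compCc ⟨Real.sqrt, Real.continuous_sqrt⟩ Real.sqrt_zero h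

@[simp] lemma sqrtCc_apply (h : C_c(X, ℝ)) (x : X) : sqrtCc h x = Real.sqrt (h x) := rfl

lemma qiOpen_dich (hρ : IsQuasiIntegral ρ)
    (F1 : ∀ h : C_c(X, ℝ), (∀ x, 0 ≤ h x ∧ h x ≤ 1) → ρ h ≤ 1)
    (F2 : ∀ h : C_c(X, ℝ), (∀ x, 0 ≤ h x) → (ρ (sqrtCc h)) ^ 2 = ρ h)
    (U : Set X) : qiOpen ρ U = 0 ∨ qiOpen ρ U = 1 := by
  by_cases h0 : qiOpen ρ U = 0
  · exact Or.inl h0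
  right
  have hle1 : qiOpen ρ U ≤ 1 :=
    qiOpen_le (fun h hh => ENNReal.ofReal_le_one.2 (F1 h hh.1))
  have hpos : (0 : ℝ≥0∞) < qiOpen ρ U := lt_of_le_of_ne (zero_le) (Ne.symm h0)
  rw [qiOpen, lt_iSup_iff] at hpos
  obtain ⟨h, hh⟩ := hpos
  by_cases hcond : (∀ x, 0 ≤ h x ∧ h x ≤ 1) ∧ tsupport ⇑h ⊆ U
  swap
  · rw [iSup_neg hcond] at hh; exact absurd hh (by simp)
  rw [iSup_pos hcond] at hh
  have ha : 0 < ρ h := ENNReal.ofReal_pos.1 hh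
  set a := ρ h with hadef
  -- the iterated square-root sequence
  set seq : ℕ → C_c(X, ℝ) := fun k => (fun g => sqrtCc g)^[k] h with hseq
  have hstep : ∀ k, seq (k + 1) = sqrtCc (seq k) := fun k => by
    rw [hseq]; exact Function.iterate_succ_apply' _ _ _
  have inv : ∀ k, ((∀ x, 0 ≤ seq k x ∧ seq k x ≤ 1) ∧ tsupport ⇑(seq k) ⊆ U) ∧
      ρ (seq k) = a ^ (((2:ℝ) ^ k)⁻¹) := by
    intro k
    induction k with
    | zero =>
      refine ⟨⟨hcond.1, hcond.2⟩, ?_⟩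
      have : seq 0 = h := rfl
      rw [this, ← hadef]
      norm_num
    | succ k ih =>
      obtain ⟨⟨hb, hsupp⟩, hρk⟩ := ih
      have hb' : ∀ x, 0 ≤ seq (k+1) x ∧ seq (k+1) x ≤ 1 := by
        intro x
        rw [hstep k]
        refine ⟨Real.sqrt_nonneg _, Real.sqrt_le_one.2 (hb x).2⟩
      have hsupp' : tsupport ⇑(seq (k+1)) ⊆ U := by
        rw [hstep k]
        refine le_trans (closure_mono ?_) hsupp
        intro x hx
        rw [Function.mem_support] at hx ⊢
        intro h0
        exact hx (by rw [sqrtCc_apply, h0, Real.sqrt_zero])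
      refine ⟨⟨hb', hsupp'⟩, ?_⟩
      have hsq : (ρ (seq (k+1))) ^ 2 = a ^ (((2:ℝ) ^ k)⁻¹) := by
        rw [hstep k, F2 (seq k) (fun x => (hb x).1), hρk]
      have hnn : 0 ≤ ρ (seq (k+1)) := hρ.pos _ (fun x => (hb' x).1)
      have : ρ (seq (k+1)) = Real.sqrt (a ^ (((2:ℝ) ^ k)⁻¹)) := by
        rw [← hsq, Real.sqrt_sq hnn]
      rw [this, Real.sqrt_eq_rpow, ← Real.rpow_mul ha.le]
      congr 1
      rw [pow_succ, mul_inv]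
      ring
  have hexp : Filter.Tendsto (fun k : ℕ => ((2:ℝ) ^ k)⁻¹) Filter.atTop (nhds 0) := by
    have h2 : Filter.Tendsto (fun k : ℕ => ((2:ℝ)⁻¹) ^ k) Filter.atTop (nhds 0) :=
      tendsto_pow_atTop_nhds_zero_of_lt_one (by norm_num) (by norm_num)
    simpa [inv_pow] using h2
  have hlim : Filter.Tendsto (fun k : ℕ => a ^ (((2:ℝ) ^ k)⁻¹)) Filter.atTop (nhds 1) := by
    have h1 : Filter.Tendsto (fun k : ℕ => Real.log a * ((2:ℝ) ^ k)⁻¹)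
        Filter.atTop (nhds 0) := by
      simpa using hexp.const_mul (Real.log a)
    have h2 := (Real.continuous_exp.tendsto 0).comp h1
    rw [Real.exp_zero] at h2
    refine h2.congr (fun k => ?_)
    simp only [Function.comp_apply]
    rw [Real.rpow_def_of_pos ha]
  have hterm : ∀ k, ENNReal.ofReal (a ^ (((2:ℝ) ^ k)⁻¹)) ≤ qiOpen ρ U := fun k => by
    rw [← (inv k).2]
    exact le_qiOpen ⟨(inv k).1.1, (inv k).1.2⟩
  have hge : (1 : ℝ≥0∞) ≤ qiOpen ρ U := by
    have hc := (ENNReal.continuous_ofReal.tendsto 1).comp hlim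
    have := le_of_tendsto hc (Filter.Eventually.of_forall hterm)
    simpa using this
  exact le_antisymm hle1 hge

lemma simple_of_facts (hρ : IsQuasiIntegral ρ)
    (F1 : ∀ h : C_c(X, ℝ), (∀ x, 0 ≤ h x ∧ h x ≤ 1) → ρ h ≤ 1)
    (F2 : ∀ h : C_c(X, ℝ), (∀ x, 0 ≤ h x) → (ρ (sqrtCc h)) ^ 2 = ρ h) :
    IsSimpleQI ρ := by
  intro A _
  by_cases hAo : IsOpen A
  · rw [qiMeas_of_isOpen hAo]
    exact qiOpen_dich hρ F1 F2 A
  · have hrw : qiMeas ρ A = ⨅ (U : Set X) (_ : IsOpen U ∧ A ⊆ U), qiOpen ρ U := by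
      simp only [qiMeas]
      rw [if_neg hAo]
    rw [hrw]
    by_cases hex : ∃ U : Set X, (IsOpen U ∧ A ⊆ U) ∧ qiOpen ρ U = 0
    · obtain ⟨U, hUc, hU0⟩ := hex
      left
      refine le_antisymm ?_ (zero_le)
      exact (iInf₂_le U hUc).trans hU0.le
    · right
      push_neg at hex
      have hall : ∀ U : Set X, IsOpen U ∧ A ⊆ U → qiOpen ρ U = 1 := by
        intro U hU
        rcases qiOpen_dich hρ F1 F2 U with h | h
        · exact absurd h (hex U hU)
        · exact h
      refine le_antisymm ?_ (le_iInf₂ (fun U hU => (hall U hU).symm.le))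
      exact (iInf₂_le Set.univ ⟨isOpen_univ, Set.subset_univ _⟩).trans
        (hall Set.univ ⟨isOpen_univ, Set.subset_univ _⟩).le

/-- The square as a continuous map. -/
noncomputable def sqCM : C(ℝ, ℝ) := ⟨fun s => s * s, continuous_id.mul continuous_id⟩

lemma facts_of_ii (hρ : IsQuasiIntegral ρ)
    (hii : ∀ (φ : C(ℝ, ℝ)) (hφ : φ 0 = 0) (f : C_c(X, ℝ)), ρ (compCc φ hφ f) = φ (ρ f)) :
    (∀ h : C_c(X, ℝ), (∀ x, 0 ≤ h x ∧ h x ≤ 1) → ρ h ≤ 1) ∧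
    (∀ h : C_c(X, ℝ), (∀ x, 0 ≤ h x) → (ρ (sqrtCc h)) ^ 2 = ρ h) := by
  have hsq0 : sqCM 0 = 0 := by simp [sqCM]
  constructor
  · intro h hb
    set φd : C(ℝ, ℝ) := ⟨fun s => s - s * s,
      continuous_id.sub (continuous_id.mul continuous_id)⟩ with hφd
    have hφd0 : φd 0 = 0 := by simp [hφd]
    have hpos : 0 ≤ ρ (compCc φd hφd0 h) := hρ.pos _ (fun x => by
      simp only [compCc_apply, hφd, ContinuousMap.coe_mk]
      nlinarith [(hb x).1, (hb x).2])
    rw [hii φd hφd0 h] at hpos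
    simp only [hφd, ContinuousMap.coe_mk] at hpos
    have hρh : 0 ≤ ρ h := hρ.pos _ (fun x => (hb x).1)
    nlinarith
  · intro h hb
    have hcomp : compCc sqCM hsq0 (sqrtCc h) = h := by
      apply CompactlySupportedContinuousMap.ext
      intro x
      simp only [compCc_apply, sqCM, ContinuousMap.coe_mk, sqrtCc_apply]
      exact Real.mul_self_sqrt (hb x)
    have := hii sqCM hsq0 (sqrtCc h)
    rw [hcomp] at this
    simp only [sqCM, ContinuousMap.coe_mk] at this
    rw [this]
    ring

lemma facts_of_iii (hρ : IsQuasiIntegral ρ)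
    (hiii : ∀ f g h : C_c(X, ℝ), InB f g → InB f h → ρ (g * h) = ρ g * ρ h) :
    (∀ h : C_c(X, ℝ), (∀ x, 0 ≤ h x ∧ h x ≤ 1) → ρ h ≤ 1) ∧
    (∀ h : C_c(X, ℝ), (∀ x, 0 ≤ h x) → (ρ (sqrtCc h)) ^ 2 = ρ h) := by
  have hsq0 : sqCM 0 = 0 := by simp [sqCM]
  constructor
  · intro h hb
    set φd : C(ℝ, ℝ) := ⟨fun s => s - s * s,
      continuous_id.sub (continuous_id.mul continuous_id)⟩ with hφd
    have hφd0 : φd 0 = 0 := by simp [hφd]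
    have hInB1 : InB h (h * h) := ⟨sqCM, hsq0, fun x => by
      rw [CompactlySupportedContinuousMap.mul_apply]; rfl⟩
    have hInB2 : InB h (compCc φd hφd0 h) := inB_compCc _ _ _
    have hadd := hρ.add h (h * h) (compCc φd hφd0 h) hInB1 hInB2
    have hsum : h * h + compCc φd hφd0 h = h := by
      apply CompactlySupportedContinuousMap.ext
      intro x
      simp only [CompactlySupportedContinuousMap.add_apply, CompactlySupportedContinuousMap.mul_apply, compCc_apply, hφd, ContinuousMap.coe_mk]
      ring
    rw [hsum] at hadd
    have hmul : ρ (h * h) = ρ h * ρ h := hiii h h h (inB_self h) (inB_self h)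
    have hpos : 0 ≤ ρ (compCc φd hφd0 h) := hρ.pos _ (fun x => by
      simp only [compCc_apply, hφd, ContinuousMap.coe_mk]
      nlinarith [(hb x).1, (hb x).2])
    have hρh : 0 ≤ ρ h := hρ.pos _ (fun x => (hb x).1)
    nlinarith
  · intro h hb
    have hmul : ρ (sqrtCc h * sqrtCc h) = ρ (sqrtCc h) * ρ (sqrtCc h) :=
      hiii (sqrtCc h) (sqrtCc h) (sqrtCc h) (inB_self _) (inB_self _)
    have hcomp : sqrtCc h * sqrtCc h = h := by
      apply CompactlySupportedContinuousMap.ext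
      intro x
      rw [CompactlySupportedContinuousMap.mul_apply, sqrtCc_apply]
      exact Real.mul_self_sqrt (hb x)
    rw [hcomp] at hmul
    rw [hmul]
    ring

lemma ii_to_iii (hρ : IsQuasiIntegral ρ)
    (hii : ∀ (φ : C(ℝ, ℝ)) (hφ : φ 0 = 0) (f : C_c(X, ℝ)), ρ (compCc φ hφ f) = φ (ρ f))
    (f g h : C_c(X, ℝ)) (hg : InB f g) (hh : InB f h) : ρ (g * h) = ρ g * ρ h := by
  obtain ⟨φ, hφ0, hφ⟩ := hg
  obtain ⟨ψ, hψ0, hψ⟩ := hh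
  have hgeq : g = compCc φ hφ0 f :=
    CompactlySupportedContinuousMap.ext (fun x => hφ x)
  have hheq : h = compCc ψ hψ0 f :=
    CompactlySupportedContinuousMap.ext (fun x => hψ x)
  have hmul0 : (φ * ψ) 0 = 0 := by simp [hφ0]
  have hmuleq : g * h = compCc (φ * ψ) hmul0 f := by
    apply CompactlySupportedContinuousMap.ext
    intro x
    rw [CompactlySupportedContinuousMap.mul_apply, hφ x, hψ x]
    rfl
  rw [hmuleq, hii, hgeq, hheq, hii, hii]
  simp

end Converse
theorem statement1 {X : Type*} [TopologicalSpace X] [LocallyCompactSpace X] [T2Space X]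
    [ConnectedSpace X] (ρ : C_c(X, ℝ) → ℝ) (hρ : IsQuasiIntegral ρ) :
    (IsSimpleQI ρ ↔
      ∀ (φ : C(ℝ, ℝ)) (hφ : φ 0 = 0) (f : C_c(X, ℝ)), ρ (compCc φ hφ f) = φ (ρ f)) ∧
    (IsSimpleQI ρ ↔
      ∀ f g h : C_c(X, ℝ), InB f g → InB f h → ρ (g * h) = ρ g * ρ h) := by
  refine ⟨⟨fun hS => simple_to_ii hρ hS, fun hii => ?_⟩,
    ⟨fun hS f g h hg hh => ii_to_iii hρ (simple_to_ii hρ hS) f g h hg hh, fun hiii => ?_⟩⟩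
  · obtain ⟨F1, F2⟩ := facts_of_ii hρ hii
    exact simple_of_facts hρ F1 F2
  · obtain ⟨F1, F2⟩ := facts_of_iii hρ hiii
    exact simple_of_facts hρ F1 F2
end QLF
end

section
/- Let X and Y be locally compact, connected Hausdorff spaces, ρ a quasi-integral on C_c(X) with corresponding topological measure μ, and η a quasi-integral on C_c(Y) with corresponding topological measure ν. Then sup{(η × ρ)(f) : f ∈ C_c(X × Y), 0 ≤ f ≤ 1} = μ(X)·ν(Y) and sup{(ρ × η)(f) : f ∈ C_c(X × Y), 0 ≤ f ≤ 1} = μ(X)·ν(Y) (as values in [0,∞]); that is, (ν × μ)(X × Y) = (μ × ν)(X × Y) = μ(X)·ν(Y). -/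
open scoped ENNReal CompactlySupported
open CompactlySupportedContinuousMap

namespace QLF
set_option linter.unusedSectionVars false
section Aux

variable {X Y : Type*} [TopologicalSpace X] [T2Space X] [TopologicalSpace Y] [T2Space Y]

theorem qi_zero {ρ : C_c(X, ℝ) → ℝ} (hρ : IsQuasiIntegral ρ) : ρ 0 = 0 := by
  have := hρ.smul 0 0
  simpa using this

theorem cc_bound (f : C_c(X, ℝ)) : ∃ c : ℝ, 0 < c ∧ ∀ x, |f x| ≤ c := by
  have hb : BddAbove (Set.range fun x => |f x|) :=
    (f.continuous.abs).bddAbove_range_of_hasCompactSupport f.hasCompactSupport'.abs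
  obtain ⟨b, hb⟩ := hb
  refine ⟨max b 1, lt_of_lt_of_le one_pos (le_max_right _ _), fun x => ?_⟩
  exact le_trans (hb (Set.mem_range_self x)) (le_max_left _ _)

theorem ofReal_le_qiOpen {ρ : C_c(X, ℝ) → ℝ} {f : C_c(X, ℝ)}
    (hf : ∀ x, 0 ≤ f x ∧ f x ≤ 1) :
    ENNReal.ofReal (ρ f) ≤ qiOpen ρ Set.univ := by
  refine le_iSup₂_of_le f ⟨hf, Set.subset_univ _⟩ le_rfl

theorem qi_eq_zero_of_qiOpen_zero {ρ : C_c(X, ℝ) → ℝ} (hρ : IsQuasiIntegral ρ)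
    (h0 : qiOpen ρ Set.univ = 0) (f : C_c(X, ℝ)) (hf : ∀ x, 0 ≤ f x) : ρ f = 0 := by
  obtain ⟨c, hc, hbd⟩ := cc_bound f
  have hmem : ∀ x, 0 ≤ (c⁻¹ • f) x ∧ (c⁻¹ • f) x ≤ 1 := by
    intro x
    have h1 : (c⁻¹ • f) x = c⁻¹ * f x := by simp
    constructor
    · rw [h1]; exact mul_nonneg (inv_nonneg.mpr hc.le) (hf x)
    · rw [h1, inv_mul_le_one₀ hc]
      exact le_trans (le_abs_self _) (hbd x)
  have hle : ENNReal.ofReal (ρ (c⁻¹ • f)) ≤ 0 := h0 ▸ ofReal_le_qiOpen hmem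
  have hge : 0 ≤ ρ (c⁻¹ • f) := hρ.pos _ fun x => (hmem x).1
  have : ρ (c⁻¹ • f) = 0 := le_antisymm (by simpa using hle) hge
  have hsmul := hρ.smul c (c⁻¹ • f)
  rw [smul_smul, mul_inv_cancel₀ hc.ne', one_smul] at hsmul
  rw [hsmul, this, mul_zero]

theorem fiberY_tensor (g : C_c(X, ℝ)) (h : C_c(Y, ℝ)) (y : Y) :
    fiberY (tensor g h) y = h y • g := by
  ext x
  simp [fiberY, tensor, mul_comm]

theorem TCc_tensor {ρ : C_c(X, ℝ) → ℝ} (hρ : IsQuasiIntegral ρ)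
    (g : C_c(X, ℝ)) (h : C_c(Y, ℝ)) : TCc ρ (tensor g h) = ρ g • h := by
  have hT : Tmap ρ (tensor g h) = ⇑(ρ g • h) := by
    funext y
    simp only [Tmap, fiberY_tensor, hρ.smul, coe_smul, Pi.smul_apply, smul_eq_mul]
    ring
  have hc : Continuous (Tmap ρ (tensor g h)) ∧ HasCompactSupport (Tmap ρ (tensor g h)) := by
    rw [hT]; exact ⟨(ρ g • h).continuous, (ρ g • h).hasCompactSupport'⟩
  rw [TCc, dif_pos hc]
  ext y
  exact congrFun hT y

theorem prodQI_tensor {ρ : C_c(X, ℝ) → ℝ} {η : C_c(Y, ℝ) → ℝ}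
    (hρ : IsQuasiIntegral ρ) (hη : IsQuasiIntegral η)
    (g : C_c(X, ℝ)) (h : C_c(Y, ℝ)) : prodQI η ρ (tensor g h) = ρ g * η h := by
  rw [prodQI, TCc_tensor hρ, hη.smul]

end Aux
theorem prodQI_qiOpen_univ {X Y : Type*} [TopologicalSpace X] [T2Space X]
    [TopologicalSpace Y] [T2Space Y]
    (ρ : C_c(X, ℝ) → ℝ) (η : C_c(Y, ℝ) → ℝ)
    (hρ : IsQuasiIntegral ρ) (hη : IsQuasiIntegral η) :
    qiOpen (prodQI η ρ) (Set.univ : Set (X × Y))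
      = qiOpen ρ Set.univ * qiOpen η Set.univ := by
  set M := qiOpen ρ (Set.univ : Set X) with hM
  set N := qiOpen η (Set.univ : Set Y) with hN
  refine le_antisymm ?_ ?_
  · -- ≤ direction
    rw [qiOpen]
    refine iSup₂_le fun f hf => ?_
    by_cases hc : Continuous (Tmap ρ f) ∧ HasCompactSupport (Tmap ρ f)
    · have hTcoe : ⇑(TCc ρ f) = Tmap ρ f := by rw [TCc, dif_pos hc]; exact rfl
      have hTval : ∀ y, TCc ρ f y = ρ (fiberY f y) := fun y => congrFun hTcoe y
      have hTnn : ∀ y, 0 ≤ TCc ρ f y := fun y => by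
        rw [hTval]
        exact hρ.pos _ fun x => (hf.1 (x, y)).1
      have hTle : ∀ y, ENNReal.ofReal (TCc ρ f y) ≤ M := fun y => by
        rw [hTval]
        exact ofReal_le_qiOpen fun x => hf.1 (x, y)
      by_cases hM0 : M = 0
      · have hT0 : TCc ρ f = 0 := by
          ext y
          have := hTle y
          rw [hM0, nonpos_iff_eq_zero, ENNReal.ofReal_eq_zero] at this
          exact le_antisymm this (hTnn y)
        rw [prodQI, hT0, qi_zero hη]
        simp
      · by_cases hN0 : N = 0
        · rw [prodQI, qi_eq_zero_of_qiOpen_zero hη hN0 _ hTnn]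
          simp
        · by_cases hMt : M = ⊤
          · rw [hMt, ENNReal.top_mul hN0]; exact le_top
          · by_cases hNt : N = ⊤
            · rw [hNt, ENNReal.mul_top hM0]; exact le_top
            · set a := M.toReal with ha
              have ha0 : 0 < a := ENNReal.toReal_pos hM0 hMt
              set T := TCc ρ f with hT
              have hTa : ∀ y, T y ≤ a := fun y =>
                (ENNReal.ofReal_le_iff_le_toReal hMt).mp (hTle y)
              have hmem : ∀ y, 0 ≤ (a⁻¹ • T) y ∧ (a⁻¹ • T) y ≤ 1 := fun y => by
                simp only [coe_smul, Pi.smul_apply, smul_eq_mul]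
                exact ⟨mul_nonneg (inv_nonneg.mpr ha0.le) (hTnn y),
                  (inv_mul_le_one₀ ha0).mpr (hTa y)⟩
              have h2 : η (a⁻¹ • T) ≤ N.toReal :=
                (ENNReal.ofReal_le_iff_le_toReal hNt).mp (ofReal_le_qiOpen hmem)
              have h3 : η T = a * η (a⁻¹ • T) := by
                have := hη.smul a (a⁻¹ • T)
                rwa [smul_smul, mul_inv_cancel₀ ha0.ne', one_smul] at this
              calc ENNReal.ofReal (prodQI η ρ f)
                  = ENNReal.ofReal (a * η (a⁻¹ • T)) := by rw [prodQI, ← hT, h3]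
                _ ≤ ENNReal.ofReal (a * N.toReal) :=
                    ENNReal.ofReal_le_ofReal (mul_le_mul_of_nonneg_left h2 ha0.le)
                _ = ENNReal.ofReal a * ENNReal.ofReal N.toReal := ENNReal.ofReal_mul ha0.le
                _ = M * N := by
                    rw [ha, ENNReal.ofReal_toReal hMt, ENNReal.ofReal_toReal hNt]
    · have hT0 : TCc ρ f = 0 := by rw [TCc, dif_neg hc]
      rw [prodQI, hT0, qi_zero hη]
      simp
  · -- ≥ direction
    have key : ∀ g : C_c(X, ℝ), (∀ x, 0 ≤ g x ∧ g x ≤ 1) → ∀ h : C_c(Y, ℝ),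
        (∀ y, 0 ≤ h y ∧ h y ≤ 1) → ENNReal.ofReal (ρ g) * ENNReal.ofReal (η h) ≤
          qiOpen (prodQI η ρ) (Set.univ : Set (X × Y)) := by
      intro g hg1 h hh1
      have hg : (∀ x, 0 ≤ g x ∧ g x ≤ 1) ∧ tsupport ⇑g ⊆ Set.univ := ⟨hg1, Set.subset_univ _⟩
      have hh : (∀ y, 0 ≤ h y ∧ h y ≤ 1) ∧ tsupport ⇑h ⊆ Set.univ := ⟨hh1, Set.subset_univ _⟩
      calc ENNReal.ofReal (ρ g) * ENNReal.ofReal (η h)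
        = ENNReal.ofReal (ρ g * η h) :=
          (ENNReal.ofReal_mul (hρ.pos g fun x => (hg.1 x).1)).symm
      _ = ENNReal.ofReal (prodQI η ρ (tensor g h)) := by rw [prodQI_tensor hρ hη]
      _ ≤ qiOpen (prodQI η ρ) (Set.univ : Set (X × Y)) := by
          refine ofReal_le_qiOpen fun p => ?_
          exact ⟨mul_nonneg (hg.1 p.1).1 (hh.1 p.2).1,
            mul_le_one₀ (hg.1 p.1).2 (hh.1 p.2).1 (hh.1 p.2).2⟩
    rw [hM, qiOpen, ENNReal.iSup_mul]
    refine iSup_le fun g => ?_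
    rw [ENNReal.iSup_mul]
    refine iSup_le fun hg => ?_
    rw [hN, qiOpen, ENNReal.mul_iSup]
    refine iSup_le fun h => ?_
    rw [ENNReal.mul_iSup]
    refine iSup_le fun hh => ?_
    exact key g hg.1 h hh.1

/-- Swap of coordinates as a map `C_c(X × Y, ℝ) → C_c(Y × X, ℝ)`. -/
noncomputable def swapCc {X Y : Type*} [TopologicalSpace X] [TopologicalSpace Y]
    (f : C_c(X × Y, ℝ)) : C_c(Y × X, ℝ) :=
  ⟨⟨fun p => f (p.2, p.1), f.continuous.comp (continuous_snd.prodMk continuous_fst)⟩,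
    f.hasCompactSupport'.comp_isClosedEmbedding
      (Homeomorph.prodComm Y X).isClosedEmbedding⟩

theorem prodQI'_eq_swap {X Y : Type*} [TopologicalSpace X] [T2Space X]
    [TopologicalSpace Y] [T2Space Y]
    (ρ : C_c(X, ℝ) → ℝ) (η : C_c(Y, ℝ) → ℝ) (f : C_c(X × Y, ℝ)) :
    prodQI' ρ η f = prodQI ρ η (swapCc f) := by
  have h1 : Smap η f = Tmap η (swapCc f) := by
    funext x
    have : fiberX f x = fiberY (swapCc f) x := by ext y; rfl
    rw [Smap, Tmap, this]
  rw [prodQI', prodQI]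
  congr 1

theorem prodQI'_qiOpen_univ {X Y : Type*} [TopologicalSpace X] [T2Space X]
    [TopologicalSpace Y] [T2Space Y]
    (ρ : C_c(X, ℝ) → ℝ) (η : C_c(Y, ℝ) → ℝ)
    (hρ : IsQuasiIntegral ρ) (hη : IsQuasiIntegral η) :
    qiOpen (prodQI' ρ η) (Set.univ : Set (X × Y))
      = qiOpen ρ Set.univ * qiOpen η Set.univ := by
  rw [mul_comm, ← prodQI_qiOpen_univ η ρ hη hρ, qiOpen, qiOpen]
  refine le_antisymm (iSup₂_le fun f hf => ?_) (iSup₂_le fun f hf => ?_)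
  · rw [prodQI'_eq_swap]
    exact le_iSup₂_of_le (swapCc f) ⟨fun p => hf.1 (p.2, p.1), Set.subset_univ _⟩ le_rfl
  · have hss : swapCc (swapCc f) = f := by ext p; rfl
    have : prodQI ρ η f = prodQI' ρ η (swapCc f) := by
      rw [prodQI'_eq_swap, hss]
    rw [this]
    exact le_iSup₂_of_le (swapCc f) ⟨fun p => hf.1 (p.2, p.1), Set.subset_univ _⟩ le_rfl

theorem qiMeas_univ {Z : Type*} [TopologicalSpace Z] (σ : C_c(Z, ℝ) → ℝ) :
    qiMeas σ (Set.univ : Set Z) = qiOpen σ Set.univ := by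
  rw [qiMeas, if_pos isOpen_univ]


theorem statement6 {X Y : Type*}
    [TopologicalSpace X] [LocallyCompactSpace X] [T2Space X] [ConnectedSpace X]
    [TopologicalSpace Y] [LocallyCompactSpace Y] [T2Space Y] [ConnectedSpace Y]
    (ρ : C_c(X, ℝ) → ℝ) (η : C_c(Y, ℝ) → ℝ)
    (hρ : IsQuasiIntegral ρ) (hη : IsQuasiIntegral η) :
    qiMeas (prodQI η ρ) (Set.univ : Set (X × Y))
      = qiMeas ρ (Set.univ : Set X) * qiMeas η (Set.univ : Set Y) ∧
    qiMeas (prodQI' ρ η) (Set.univ : Set (X × Y))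
      = qiMeas ρ (Set.univ : Set X) * qiMeas η (Set.univ : Set Y) := by
  rw [qiMeas_univ, qiMeas_univ, qiMeas_univ, qiMeas_univ]
  exact ⟨prodQI_qiOpen_univ ρ η hρ hη, prodQI'_qiOpen_univ ρ η hρ hη⟩
end QLF
end
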